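/- arXiv:1001.3590 — 5 statements merged into one kernel-verified Lean document; each statement's English description precedes it below -/
import Mathlib

section
/- A kernel k on X with values in L(A,B) is completely positive if and only if for every finite subset {x_1,…,x_n} of X the Schur map M_n(A) → M_n(B), (a_{ij}) ↦ (k(x_i,x_j)[a_{ij}]), is a completely positive map. -/
open scoped ComplexOrder InnerProductSpace Matrix

section Defs

variable {X : Type*}

/-- Positivity in the C*-algebra of `ι × ι` matrices over `R`: an element is
positive iff it factors as `Nᴴ * N`. -/
def MatPos {R ι : Type*} [Fintype ι] [NonUnitalSemiring R] [StarRing R]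
    (M : Matrix ι ι R) : Prop :=
  ∃ N : Matrix ι ι R, M = Nᴴ * N

/-- `‖M‖ ≤ c` in the C*-algebra of `ι × ι` matrices over the unital C*-algebra `R`,
expressed via positivity of `c ^ 2 • 1 - Mᴴ * M`. -/
def MatNormLe {R ι : Type*} [Fintype ι] [DecidableEq ι] [Ring R] [StarRing R] [Module ℂ R]
    (M : Matrix ι ι R) (c : ℝ) : Prop :=
  0 ≤ c ∧ MatPos (((c : ℂ) ^ 2) • (1 : Matrix ι ι R) - Mᴴ * M)

variable {A : Type*} [CStarAlgebra A]
variable {B : Type*} [CStarAlgebra B] [PartialOrder B] [StarOrderedRing B]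

/-- A kernel on `X` with values in `L(A,B)` is completely positive. -/
def IsCPKernel (k : X → X → A →L[ℂ] B) : Prop :=
  ∀ (n : ℕ) (x : Fin n → X) (a : Fin n → A) (b : Fin n → B),
    0 ≤ ∑ i : Fin n, ∑ j : Fin n, star (b i) * (k (x i) (x j) (star (a i) * a j)) * b j

/-- The adjoint kernel `k*`, given by `k*(x,y)[a] = (k(y,x)[a*])*`. -/
noncomputable def kadj (k : X → X → A →L[ℂ] B) (x y : X) : A →L[ℂ] B :=
  { toFun := fun a => star (k y x (star a))
    map_add' := by intros; simp
    map_smul' := by intros; simp [star_smul]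
    cont := continuous_star.comp ((k y x).continuous.comp continuous_star) }

@[simp] theorem kadj_apply (k : X → X → A →L[ℂ] B) (x y : X) (a : A) :
    kadj k x y a = star (k y x (star a)) := rfl

/-- The Schur product map `M_n(A) → M_n(B)` associated to the kernel `k` and the
finite family `x_1, …, x_n` in `X`. -/
noncomputable def schurMap {n : ℕ} (k : X → X → A →L[ℂ] B) (x : Fin n → X)
    (M : Matrix (Fin n) (Fin n) A) : Matrix (Fin n) (Fin n) B :=
  Matrix.of fun i j => k (x i) (x j) (M i j)

/-- The `m`-th amplification `φ ⊗ id_{M_m}` of a map `φ : M_ι(A) → M_ι(B)`, realized on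
`M_{m·ι}` via the canonical identification `M_m(M_ι(·)) ≅ M_{m·ι}(·)`. -/
def ampl {ι : Type*} (φ : Matrix ι ι A → Matrix ι ι B) (m : ℕ)
    (M : Matrix (Fin m × ι) (Fin m × ι) A) : Matrix (Fin m × ι) (Fin m × ι) B :=
  Matrix.of fun p q => φ (Matrix.of fun i j => M (p.1, i) (q.1, j)) p.2 q.2

/-- A map `M_ι(A) → M_ι(B)` is completely positive: all amplifications preserve positivity. -/
def IsCPMap {ι : Type*} [Fintype ι] (φ : Matrix ι ι A → Matrix ι ι B) : Prop :=
  ∀ (m : ℕ) (M : Matrix (Fin m × ι) (Fin m × ι) A), MatPos M → MatPos (ampl φ m M)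

/-- A map `M_ι(A) → M_ι(B)` is completely bounded: the norms of all amplifications
are uniformly bounded by some `C`. -/
def IsCBMap {ι : Type*} [Fintype ι] [DecidableEq ι] (φ : Matrix ι ι A → Matrix ι ι B) : Prop :=
  ∃ C : ℝ, ∀ (m : ℕ) (M : Matrix (Fin m × ι) (Fin m × ι) A) (c : ℝ),
    MatNormLe M c → MatNormLe (ampl φ m M) (C * c)

/-- A kernel is completely bounded if for every finite family of points the associated
Schur product map is completely bounded. -/
def IsCBKernel (k : X → X → A →L[ℂ] B) : Prop :=
  ∀ (n : ℕ) (x : Fin n → X), IsCBMap (schurMap k x)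

/-- Complete positivity for a kernel on `X` with values in the maps `A → M₂(B)`,
positivity in `M₂(B)` being positivity in the C*-algebra of `2 × 2` matrices over `B`. -/
def IsCPKernelM (K : X → X → A → Matrix (Fin 2) (Fin 2) B) : Prop :=
  ∀ (n : ℕ) (x : Fin n → X) (a : Fin n → A) (b : Fin n → Matrix (Fin 2) (Fin 2) B),
    MatPos (∑ i : Fin n, ∑ j : Fin n, (b i)ᴴ * (K (x i) (x j) (star (a i) * a j)) * b j)

/-- Complete positivity for a kernel on `X` with values in the maps `M₂(A) → M₂(B)`. -/
def IsCPKernelMM (K : X → X → Matrix (Fin 2) (Fin 2) A → Matrix (Fin 2) (Fin 2) B) : Prop :=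
  ∀ (n : ℕ) (x : Fin n → X) (c : Fin n → Matrix (Fin 2) (Fin 2) A)
    (d : Fin n → Matrix (Fin 2) (Fin 2) B),
    MatPos (∑ i : Fin n, ∑ j : Fin n, (d i)ᴴ * (K (x i) (x j) ((c i)ᴴ * c j)) * d j)

/-- The `2 × 2` block map `M₂(M_ι(A)) → M₂(M_ι(B))` determined by four maps
`M_ι(A) → M_ι(B)`, realized on `M_{2·ι}` via the canonical shuffle. -/
def blockMap {ι : Type*} (f : Fin 2 → Fin 2 → (Matrix ι ι A → Matrix ι ι B))
    (M : Matrix (Fin 2 × ι) (Fin 2 × ι) A) : Matrix (Fin 2 × ι) (Fin 2 × ι) B :=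
  Matrix.of fun p q => f p.1 q.1 (Matrix.of fun i j => M (p.1, i) (q.1, j)) p.2 q.2

end Defs

namespace MatCStar

attribute [-instance] Matrix.instUniformSpace instTopologicalSpaceMatrix

open WithCStarModule Finset

variable {B : Type*} [CStarAlgebra B] [PartialOrder B] [StarOrderedRing B]
variable {P : Type*} [Fintype P] [DecidableEq P]

noncomputable instance instCStarAlgebra : CStarAlgebra (Matrix P P B) :=
  inferInstanceAs (CStarAlgebra (CStarMatrix P P B))

noncomputable instance instPO : PartialOrder (Matrix P P B) := CStarAlgebra.spectralOrder _

instance instSOR : StarOrderedRing (Matrix P P B) := CStarAlgebra.spectralOrderedRing _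

lemma nonneg_factor {T : Matrix P P B} (h : 0 ≤ T) : ∃ N : Matrix P P B, T = star N * N := by
  refine ⟨CFC.sqrt T, ?_⟩
  have h2 : IsSelfAdjoint (CFC.sqrt T) := IsSelfAdjoint.of_nonneg (CFC.sqrt_nonneg _)
  rw [h2.star_eq, CFC.sqrt_mul_sqrt_self T h]

lemma trace_star_mul_self (W : Matrix P P B) :
    (star W * W).trace = ∑ p, ∑ r, star (W r p) * W r p := by
  rw [Matrix.trace]
  refine Finset.sum_congr rfl fun p _ => ?_
  rw [Matrix.diag]
  rw [Matrix.mul_apply]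
  refine Finset.sum_congr rfl fun r _ => by rw [Matrix.star_apply]

lemma trace_star_mul_self_nonneg (W : Matrix P P B) : 0 ≤ (star W * W).trace := by
  rw [trace_star_mul_self]
  exact Finset.sum_nonneg fun p _ => Finset.sum_nonneg fun r _ => star_mul_self_nonneg _

lemma eq_zero_of_trace_eq_zero {W : Matrix P P B} (h : (star W * W).trace = 0) : W = 0 := by
  rw [trace_star_mul_self] at h
  have h1 := (Finset.sum_eq_zero_iff_of_nonneg
    (fun p _ => Finset.sum_nonneg fun r _ => star_mul_self_nonneg (W r p))).mp h
  ext r p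
  have h2 := (Finset.sum_eq_zero_iff_of_nonneg
    (fun r _ => star_mul_self_nonneg (W r p))).mp (h1 p (Finset.mem_univ p)) r (Finset.mem_univ r)
  simpa using (CStarRing.star_mul_self_eq_zero_iff (W r p)).mp h2

section Weak

variable (T : Matrix P P B)

lemma isSelfAdjoint_of_weak
    (hT : ∀ b : P → B, 0 ≤ ∑ p, ∑ q, star (b p) * T p q * b q) :
    IsSelfAdjoint T := by
  set D : P → P → B := fun p q => T p q - star (T q p) with hD
  have key : ∀ b : P → B, ∑ p, ∑ q, star (b p) * D p q * b q = 0 := by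
    intro b
    have h1 : IsSelfAdjoint (∑ p, ∑ q, star (b p) * T p q * b q) :=
      IsSelfAdjoint.of_nonneg (hT b)
    have h2 : star (∑ p, ∑ q, star (b p) * T p q * b q)
        = ∑ p, ∑ q, star (b p) * star (T q p) * b q := by
      rw [star_sum]
      rw [Finset.sum_comm]
      refine Finset.sum_congr rfl fun p _ => ?_
      rw [star_sum]
      refine Finset.sum_congr rfl fun q _ => ?_
      simp [mul_assoc]
    have h3 : ∑ p, ∑ q, star (b p) * T p q * b q
        = ∑ p, ∑ q, star (b p) * star (T q p) * b q := by
      rw [← h2, h1.star_eq]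
    simp only [hD, mul_sub, sub_mul, Finset.sum_sub_distrib]
    rw [← h3]
    simp
  have diag : ∀ p, D p p = 0 := by
    intro p
    have := key (Pi.single p 1)
    simpa [Pi.single_apply, apply_ite (star : B → B), ite_mul, mul_ite, mul_zero, zero_mul,
      Finset.sum_ite_eq'] using this
  have offdiag : ∀ p q, p ≠ q → ∀ u v : B,
      star u * D p q * v + star v * D q p * u = 0 := by
    intro p q hpq u v
    have := key (fun r => (if r = p then u else 0) + (if r = q then v else 0))
    simp only [star_add, star_zero, apply_ite (star : B → B), add_mul, mul_add,
      Finset.sum_add_distrib, ite_mul, zero_mul, mul_zero, mul_ite,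
      Finset.sum_ite_eq', Finset.mem_univ, if_true] at this
    rw [diag p, diag q] at this
    simp only [mul_zero, zero_mul, add_zero, zero_add] at this
    rw [add_comm] at this
    exact this
  have hDzero : ∀ p q, D p q = 0 := by
    intro p q
    rcases eq_or_ne p q with rfl | hpq
    · exact diag p
    · have e1 := offdiag p q hpq 1 1
      have e2 := offdiag p q hpq 1 ((Complex.I : ℂ) • (1 : B))
      simp only [star_one, one_mul, mul_one] at e1
      simp only [star_one, one_mul, mul_one, star_smul, smul_mul_assoc, mul_smul_comm,
        star_one, Complex.star_def, Complex.conj_I] at e2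
      -- e1 : D p q + D q p = 0, e2 : I • D p q + (-I) • D q p = 0
      have e3 : D q p = -D p q := by linear_combination (norm := module) e1
      rw [e3] at e2
      have e4 : (Complex.I : ℂ) • (D p q + D p q) = 0 := by
        rw [smul_add]
        linear_combination (norm := module) e2
      have e5 : D p q + D p q = 0 := by
        have := congrArg (fun x => (Complex.I : ℂ)⁻¹ • x) e4
        simpa [smul_smul, Complex.I_ne_zero] using this
      have e6 : D p q = - D p q := by linear_combination (norm := module) e5
      have : (2 : ℂ) • D p q = 0 := by
        rw [two_smul]
        linear_combination (norm := module) e5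
      have := congrArg (fun x => ((2 : ℂ))⁻¹ • x) this
      simpa [smul_smul] using this
  rw [IsSelfAdjoint]
  ext p q
  rw [Matrix.star_apply]
  have := hDzero q p
  simp only [hD] at this
  rw [sub_eq_zero] at this
  rw [this, star_star]

lemma quadratic_eq_diag (N : Matrix P P B) (j : P) :
    (star N * T * N) j j = ∑ p, ∑ q, star (N p j) * T p q * N q j := by
  rw [Matrix.mul_apply]
  simp only [Matrix.mul_apply, Matrix.star_apply, Finset.sum_mul]
  rw [Finset.sum_comm]

lemma nonneg_of_weak
    (hT : ∀ b : P → B, 0 ≤ ∑ p, ∑ q, star (b p) * T p q * b q) :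
    0 ≤ T := by
  have hsa := isSelfAdjoint_of_weak T hT
  set N : Matrix P P B := T⁻ with hN
  have hNnn : 0 ≤ N := CFC.negPart_nonneg T
  have hNsa : IsSelfAdjoint N := IsSelfAdjoint.of_nonneg hNnn
  have htr1 : 0 ≤ (star N * T * N).trace := by
    rw [Matrix.trace]
    refine Finset.sum_nonneg fun j _ => ?_
    rw [Matrix.diag, quadratic_eq_diag]
    exact hT fun p => N p j
  have hkey : star N * T * N = -(N * N * N) := by
    rw [hNsa.star_eq]
    conv_lhs => rw [← CFC.posPart_sub_negPart T hsa]
    rw [mul_sub, sub_mul, ← hN]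
    rw [CFC.negPart_mul_posPart]
    simp
  have htr2 : (N * N * N).trace ≤ 0 := by
    rw [hkey, Matrix.trace_neg] at htr1
    exact neg_nonneg.mp htr1
  have hfact : N * N * N = star (CFC.sqrt N * N) * (CFC.sqrt N * N) := by
    have hs : IsSelfAdjoint (CFC.sqrt N) := IsSelfAdjoint.of_nonneg (CFC.sqrt_nonneg _)
    rw [star_mul, hs.star_eq, hNsa.star_eq]
    calc N * N * N = N * (CFC.sqrt N * CFC.sqrt N) * N := by
          rw [CFC.sqrt_mul_sqrt_self N hNnn]
      _ = N * CFC.sqrt N * (CFC.sqrt N * N) := by noncomm_ring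
  have htr3 : (N * N * N).trace = 0 := by
    refine le_antisymm htr2 ?_
    rw [hfact]
    exact trace_star_mul_self_nonneg _
  have hW : CFC.sqrt N * N = 0 := by
    apply eq_zero_of_trace_eq_zero
    rw [← hfact, htr3]
  have hN3 : N * N * N = 0 := by rw [hfact, hW, mul_zero]
  have hNzero : N = 0 := by
    have h4 : N * N * (N * N) = 0 := by
      calc N * N * (N * N) = N * N * N * N := by noncomm_ring
        _ = 0 := by rw [hN3, zero_mul]
    have hNNsa : IsSelfAdjoint (N * N) := by
      rw [IsSelfAdjoint, star_mul, hNsa.star_eq]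
    have e1 : ‖N * N * (N * N)‖ = ‖N * N‖ * ‖N * N‖ := by
      nth_rewrite 1 [← hNNsa.star_eq]
      exact CStarRing.norm_star_mul_self (x := N * N)
    have e2 : ‖N * N‖ = ‖N‖ * ‖N‖ := by
      nth_rewrite 1 [← hNsa.star_eq]
      exact CStarRing.norm_star_mul_self (x := N)
    rw [h4, norm_zero, e2] at e1
    have h6 : ‖N‖ * ‖N‖ * (‖N‖ * ‖N‖) = 0 := e1.symm
    have h7 : ‖N‖ * ‖N‖ = 0 := by rcases mul_eq_zero.mp h6 with h | h <;> exact h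
    exact norm_eq_zero.mp (mul_self_eq_zero.mp h7)
  have := CFC.posPart_sub_negPart T hsa
  rw [← hN, hNzero, sub_zero] at this
  rw [← this]
  exact CFC.posPart_nonneg T

lemma matpos_of_weak'
    (hT : ∀ b : P → B, 0 ≤ ∑ p, ∑ q, star (b p) * T p q * b q) :
    ∃ N : Matrix P P B, T = star N * N :=
  nonneg_factor (nonneg_of_weak T hT)

end Weak

end MatCStar

/-- a kernel is completely positive iff all its finite Schur product maps
are completely positive maps. -/
theorem cp_kernel_iff_schur_maps_cp {X : Type*} {A : Type*} [CStarAlgebra A]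
    {B : Type*} [CStarAlgebra B] [PartialOrder B] [StarOrderedRing B]
    (k : X → X → A →L[ℂ] B) :
    IsCPKernel k ↔ ∀ (n : ℕ) (x : Fin n → X), IsCPMap (schurMap k x) := by
  constructor
  · intro hk n x m M hM
    obtain ⟨N, rfl⟩ := hM
    have hentry : ∀ p q : Fin m × Fin n, (ampl (schurMap k x) m (Nᴴ * N)) p q
        = ∑ r : Fin m × Fin n, (k (x p.2) (x q.2)) (star (N r p) * N r q) := by
      intro p q
      have h0 : (ampl (schurMap k x) m (Nᴴ * N)) p q
          = (k (x p.2) (x q.2)) ((Nᴴ * N) p q) := rfl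
      rw [h0, Matrix.mul_apply, map_sum]
      exact Finset.sum_congr rfl fun r _ => by rw [Matrix.conjTranspose_apply]
    obtain ⟨Q, hQ⟩ := MatCStar.matpos_of_weak' (ampl (schurMap k x) m (Nᴴ * N)) (by
      intro b
      have key : ∀ r : Fin m × Fin n, 0 ≤ ∑ p : Fin m × Fin n, ∑ q : Fin m × Fin n,
          star (b p) * (k (x p.2) (x q.2)) (star (N r p) * N r q) * b q := by
        intro r
        have h1 := hk (m * n) (fun i => x (finProdFinEquiv.symm i).2)
          (fun i => N r (finProdFinEquiv.symm i)) (fun i => b (finProdFinEquiv.symm i))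
        refine le_of_le_of_eq h1 ?_
        refine Fintype.sum_equiv finProdFinEquiv.symm _ _ fun i => ?_
        exact Fintype.sum_equiv finProdFinEquiv.symm _ _ fun j => rfl
      calc (0 : B) ≤ ∑ r : Fin m × Fin n, ∑ p : Fin m × Fin n, ∑ q : Fin m × Fin n,
            star (b p) * (k (x p.2) (x q.2)) (star (N r p) * N r q) * b q :=
          Finset.sum_nonneg fun r _ => key r
        _ = ∑ p, ∑ q, star (b p) * (ampl (schurMap k x) m (Nᴴ * N)) p q * b q := by
          rw [Finset.sum_comm]
          refine Finset.sum_congr rfl fun p _ => ?_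
          rw [Finset.sum_comm]
          refine Finset.sum_congr rfl fun q _ => ?_
          rw [hentry p q, Finset.mul_sum, Finset.sum_mul])
    exact ⟨Q, by rw [hQ, Matrix.star_eq_conjTranspose]⟩
  · intro h n x a b
    rcases Nat.eq_zero_or_pos n with rfl | hn
    · simp
    set i0 : Fin n := ⟨0, hn⟩ with hi0
    set M : Matrix (Fin 1 × Fin n) (Fin 1 × Fin n) A :=
      Matrix.of fun p q => star (a p.2) * a q.2 with hM
    have hMpos : MatPos M := by
      refine ⟨Matrix.of (fun r p => if r.2 = i0 then a p.2 else 0), ?_⟩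
      ext p q
      rw [Matrix.mul_apply]
      simp only [hM, Matrix.of_apply, Matrix.conjTranspose_apply, apply_ite (star : A → A),
        star_zero, ite_mul, mul_ite, zero_mul, mul_zero]
      rw [Fintype.sum_prod_type]
      simp [Finset.sum_ite_eq']
    obtain ⟨Q, hQ⟩ := h n x 1 M hMpos
    have hampl : ∀ i j : Fin n, (k (x i) (x j)) (star (a i) * a j)
        = (Qᴴ * Q) ((0 : Fin 1), i) ((0 : Fin 1), j) := by
      intro i j
      rw [← hQ]
      rfl
    have hsum : ∑ r : Fin 1 × Fin n,
          star (∑ j, Q r ((0 : Fin 1), j) * b j) * (∑ j, Q r ((0 : Fin 1), j) * b j)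
        = ∑ i, ∑ j, star (b i) * (k (x i) (x j)) (star (a i) * a j) * b j := by
      set t : (Fin 1 × Fin n) → Fin n → Fin n → B := fun r i j =>
        star (b i) * (star (Q r ((0 : Fin 1), i)) * (Q r ((0 : Fin 1), j) * b j)) with ht
      have e2 : ∀ i j : Fin n, star (b i) * (k (x i) (x j)) (star (a i) * a j) * b j
          = ∑ r : Fin 1 × Fin n, t r i j := by
        intro i j
        rw [hampl i j, Matrix.mul_apply]
        simp only [ht, Matrix.conjTranspose_apply, Finset.sum_mul, Finset.mul_sum, mul_assoc]
      calc ∑ r : Fin 1 × Fin n,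
            star (∑ j, Q r ((0 : Fin 1), j) * b j) * (∑ j, Q r ((0 : Fin 1), j) * b j)
          = ∑ r : Fin 1 × Fin n, ∑ j, ∑ i, t r i j := by
            simp only [ht, star_sum, star_mul, Finset.sum_mul, Finset.mul_sum, mul_assoc]
        _ = ∑ j, ∑ r : Fin 1 × Fin n, ∑ i, t r i j := Finset.sum_comm
        _ = ∑ j, ∑ i, ∑ r : Fin 1 × Fin n, t r i j := Finset.sum_congr rfl fun j _ =>
            Finset.sum_comm
        _ = ∑ i, ∑ j, ∑ r : Fin 1 × Fin n, t r i j := Finset.sum_comm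
        _ = ∑ i, ∑ j, star (b i) * (k (x i) (x j)) (star (a i) * a j) * b j := by
            simp only [e2]
    calc (0 : B) ≤ ∑ r : Fin 1 × Fin n,
          star (∑ j, Q r ((0 : Fin 1), j) * b j) * (∑ j, Q r ((0 : Fin 1), j) * b j) :=
        Finset.sum_nonneg fun r _ => star_mul_self_nonneg _
      _ = _ := hsum
end

section
/- Let k, L₁, L₂ be kernels on X with values in L(A,B) such that the M₂(B)-valued kernel K defined by K(x,y)[a] = [[L₁(x,y)[a], k(x,y)[a]], [k*(x,y)[a], L₂(x,y)[a]]] is completely positive. Then the following kernel inequalities hold: −(1/2)(L₁ + L₂) ≤ (1/2)(k + k*) ≤ (1/2)(L₁ + L₂) and −(1/2)(L₁ + L₂) ≤ (−i/2)(k − k*) ≤ (1/2)(L₁ + L₂). -/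
open scoped ComplexOrder InnerProductSpace Matrix

private lemma key_cp {X : Type*} {A : Type*} [CStarAlgebra A]
    {B : Type*} [CStarAlgebra B] [PartialOrder B] [StarOrderedRing B]
    (k L₁ L₂ : X → X → A →L[ℂ] B)
    (hK : IsCPKernelM fun x y a => !![L₁ x y a, k x y a; kadj k x y a, L₂ x y a])
    (γ : ℂ) (hγ : starRingEnd ℂ γ * γ = 1) (n : ℕ) (x : Fin n → X) (a : Fin n → A)
    (b : Fin n → B) :
    0 ≤ ∑ i : Fin n, ∑ j : Fin n, star (b i) *
      ((L₁ (x i) (x j) + γ • k (x i) (x j) + (starRingEnd ℂ γ) • kadj k (x i) (x j)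
        + L₂ (x i) (x j)) (star (a i) * a j)) * b j := by
  obtain ⟨N, hN⟩ := hK n x a (fun i => !![b i, 0; γ • b i, 0])
  have h00 : 0 ≤ (Nᴴ * N) 0 0 := by
    rw [Matrix.mul_apply]
    exact Finset.sum_nonneg fun r _ => by
      simpa [Matrix.conjTranspose_apply] using star_mul_self_nonneg (N r 0)
  rw [← hN] at h00
  refine le_of_le_of_eq h00 ?_
  rw [Matrix.sum_apply]
  refine Finset.sum_congr rfl fun i _ => ?_
  rw [Matrix.sum_apply]
  refine Finset.sum_congr rfl fun j _ => ?_
  simp only [Matrix.mul_apply, Matrix.conjTranspose_apply, Fin.sum_univ_two,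
    Matrix.cons_val', Matrix.cons_val_zero, Matrix.cons_val_one, Matrix.head_cons,
    Matrix.head_fin_const, Matrix.empty_val', Matrix.cons_val_fin_one, Matrix.of_apply,
    star_smul, star_zero, zero_mul, mul_zero, add_zero,
    ContinuousLinearMap.add_apply, ContinuousLinearMap.smul_apply]
  have hγ' : γ * star γ = 1 := by rw [mul_comm]; exact hγ
  simp only [add_mul, mul_add, smul_mul_assoc, mul_smul_comm, smul_add, smul_smul,
    starRingEnd_apply, hγ', one_smul]
  abel

private lemma cp_of_half {X : Type*} {A : Type*} [CStarAlgebra A]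
    {B : Type*} [CStarAlgebra B] [PartialOrder B] [StarOrderedRing B]
    {f g : X → X → A →L[ℂ] B}
    (hfg : ∀ x y, f x y = ((1:ℂ)/2) • g x y)
    (hg : ∀ (n : ℕ) (x : Fin n → X) (a : Fin n → A) (b : Fin n → B),
      0 ≤ ∑ i : Fin n, ∑ j : Fin n,
        star (b i) * (g (x i) (x j) (star (a i) * a j)) * b j) :
    IsCPKernel f := by
  intro n x a b
  have key := hg n x a b
  have heq : ∑ i : Fin n, ∑ j : Fin n, star (b i) * (f (x i) (x j) (star (a i) * a j)) * b j
      = ((1:ℂ)/2) • ∑ i : Fin n, ∑ j : Fin n,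
          star (b i) * (g (x i) (x j) (star (a i) * a j)) * b j := by
    rw [Finset.smul_sum]
    refine Finset.sum_congr rfl fun i _ => ?_
    rw [Finset.smul_sum]
    refine Finset.sum_congr rfl fun j _ => ?_
    rw [hfg, ContinuousLinearMap.smul_apply, mul_smul_comm, smul_mul_assoc]
  rw [heq]
  have h2 : ((1:ℂ)/2) • (∑ i : Fin n, ∑ j : Fin n,
      star (b i) * (g (x i) (x j) (star (a i) * a j)) * b j)
      = (2⁻¹:ℝ) • (∑ i : Fin n, ∑ j : Fin n,
      star (b i) * (g (x i) (x j) (star (a i) * a j)) * b j) := by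
    rw [← Complex.coe_smul]; norm_num
  rw [h2]
  exact smul_nonneg (by norm_num) key

/-- if the 2×2 matrix kernel `[[L₁, k], [k*, L₂]]` is completely positive,
then `-(1/2)(L₁+L₂) ≤ (1/2)(k+k*) ≤ (1/2)(L₁+L₂)` and
`-(1/2)(L₁+L₂) ≤ (-i/2)(k-k*) ≤ (1/2)(L₁+L₂)` as kernel inequalities. -/
theorem off_diagonal_cp_gives_kernel_inequalities {X : Type*} {A : Type*} [CStarAlgebra A]
    {B : Type*} [CStarAlgebra B] [PartialOrder B] [StarOrderedRing B]
    (k L₁ L₂ : X → X → A →L[ℂ] B)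
    (hK : IsCPKernelM fun x y a =>
      !![L₁ x y a, k x y a; kadj k x y a, L₂ x y a]) :
    (IsCPKernel fun x y =>
      ((1 : ℂ)/2) • (L₁ x y + L₂ x y) - ((1 : ℂ)/2) • (k x y + kadj k x y)) ∧
    (IsCPKernel fun x y =>
      ((1 : ℂ)/2) • (k x y + kadj k x y) + ((1 : ℂ)/2) • (L₁ x y + L₂ x y)) ∧
    (IsCPKernel fun x y =>
      ((1 : ℂ)/2) • (L₁ x y + L₂ x y) - ((-Complex.I)/2) • (k x y - kadj k x y)) ∧
    (IsCPKernel fun x y =>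
      ((-Complex.I)/2) • (k x y - kadj k x y) + ((1 : ℂ)/2) • (L₁ x y + L₂ x y)) := by
  refine ⟨?_, ?_, ?_, ?_⟩
  · refine cp_of_half (g := fun x y => L₁ x y + (-1:ℂ) • k x y
      + (starRingEnd ℂ (-1:ℂ)) • kadj k x y + L₂ x y) (fun x y => ?_)
      (key_cp k L₁ L₂ hK (-1) (by simp))
    ext a; simp; module
  · refine cp_of_half (g := fun x y => L₁ x y + (1:ℂ) • k x y
      + (starRingEnd ℂ (1:ℂ)) • kadj k x y + L₂ x y) (fun x y => ?_)
      (key_cp k L₁ L₂ hK 1 (by simp))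
    ext a; simp; module
  · refine cp_of_half (g := fun x y => L₁ x y + (Complex.I) • k x y
      + (starRingEnd ℂ (Complex.I)) • kadj k x y + L₂ x y) (fun x y => ?_)
      (key_cp k L₁ L₂ hK Complex.I (by simp [Complex.conj_I, Complex.I_mul_I]))
    ext a; simp [Complex.conj_I]; module
  · refine cp_of_half (g := fun x y => L₁ x y + (-Complex.I) • k x y
      + (starRingEnd ℂ (-Complex.I)) • kadj k x y + L₂ x y) (fun x y => ?_)
      (key_cp k L₁ L₂ hK (-Complex.I) (by simp [Complex.conj_I, Complex.I_mul_I]))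
    ext a; simp [Complex.conj_I]; module
end

section
/- Let k, L₁, L₂ be kernels on X with values in L(A,B). Then the M₂(B)-valued kernel K(x,y)[a] = [[L₁(x,y)[a], k(x,y)[a]], [k*(x,y)[a], L₂(x,y)[a]]] is completely positive if and only if for every finite subset {x_1,…,x_n} of X the block map M₂(M_n(A)) → M₂(M_n(B)) sending [[A, B],[C, D]] to [[S_{L₁}(A), S_k(B)],[S_{k*}(C), S_{L₂}(D)]] is completely positive, where S_k : M_n(A) → M_n(B) denotes the Schur map (a_{ij}) ↦ (k(x_i,x_j)[a_{ij}]) and similarly for S_{L₁}, S_{L₂}, S_{k*}. -/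
open scoped ComplexOrder InnerProductSpace Matrix

-- ======================================================================
-- Auxiliary development for the proof
-- ======================================================================
set_option maxHeartbeats 1000000
set_option linter.unusedSectionVars false

namespace MKCP

variable {ι : Type*} [Fintype ι] [DecidableEq ι]
variable {B : Type*} [CStarAlgebra B] [PartialOrder B] [StarOrderedRing B]

/-- Type synonym for matrices over a C*-algebra, to be equipped with operator norm. -/
def CSM (ι B : Type*) : Type _ := Matrix ι ι B

namespace CSM

instance : AddCommGroup (CSM ι B) := inferInstanceAs (AddCommGroup (Matrix ι ι B))
instance : Ring (CSM ι B) := inferInstanceAs (Ring (Matrix ι ι B))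
instance : StarRing (CSM ι B) := inferInstanceAs (StarRing (Matrix ι ι B))
noncomputable instance : Module ℂ (CSM ι B) := inferInstanceAs (Module ℂ (Matrix ι ι B))
noncomputable instance : Algebra ℂ (CSM ι B) := inferInstanceAs (Algebra ℂ (Matrix ι ι B))
instance : StarModule ℂ (CSM ι B) := inferInstanceAs (StarModule ℂ (Matrix ι ι B))

/-- Reinterpret a matrix as an element of `CSM`. -/
def of (M : Matrix ι ι B) : CSM ι B := M

/-- Reinterpret an element of `CSM` as a matrix. -/
def toMatrix (M : CSM ι B) : Matrix ι ι B := M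

@[simp] lemma of_toMatrix (M : CSM ι B) : of (toMatrix M) = M := rfl
@[simp] lemma toMatrix_of (M : Matrix ι ι B) : toMatrix (of M) = M := rfl
@[simp] lemma of_zero : of (0 : Matrix ι ι B) = 0 := rfl
@[simp] lemma toMatrix_zero : toMatrix (0 : CSM ι B) = 0 := rfl
@[simp] lemma of_add (M N : Matrix ι ι B) : of (M + N) = of M + of N := rfl
@[simp] lemma of_mul (M N : Matrix ι ι B) : of (M * N) = of M * of N := rfl
@[simp] lemma of_star (M : Matrix ι ι B) : of Mᴴ = star (of M) := rfl
@[simp] lemma toMatrix_mul (M N : CSM ι B) : toMatrix (M * N) = toMatrix M * toMatrix N := rfl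
@[simp] lemma toMatrix_star (M : CSM ι B) : toMatrix (star M) = (toMatrix M)ᴴ := rfl
@[simp] lemma toMatrix_sum {κ : Type*} (s : Finset κ) (f : κ → CSM ι B) (i j : ι) :
    toMatrix (∑ w ∈ s, f w) i j = ∑ w ∈ s, toMatrix (f w) i j := by
  change (∑ w ∈ s, toMatrix (f w)) i j = _
  rw [Matrix.sum_apply]

noncomputable section Norm

open WithCStarModule CStarModule

local notation "E" => WithCStarModule B (ι → B)

local notation "⟪" x ", " y "⟫" => inner B x y

/-- The ℂ-linear action of a matrix on the C*-module `(ι → B)`. -/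
def opL (M : Matrix ι ι B) : E →ₗ[ℂ] E where
  toFun v := (WithCStarModule.equiv _ _).symm (Matrix.vecMul (WithCStarModule.equiv _ _ v) Mᴴ)
  map_add' v w := by
    ext i
    simp [Matrix.add_vecMul]
  map_smul' c v := by
    ext i
    simp [Matrix.vecMul, dotProduct, Finset.smul_sum, smul_mul_assoc]

lemma opL_apply (M : Matrix ι ι B) (v : E) (i : ι) :
    opL M v i = ∑ j, v j * star (M i j) := rfl

lemma opL_norm_bound (M : Matrix ι ι B) (v : E) :
    ‖opL M v‖ ≤ (∑ i, ∑ j, ‖M i j‖) * ‖v‖ := by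
  calc ‖opL M v‖ ≤ ∑ i, ‖opL M v i‖ := pi_norm_le_sum_norm _
    _ ≤ ∑ i, ∑ j, ‖M i j‖ * ‖v‖ := by
        refine Finset.sum_le_sum fun i _ => ?_
        rw [opL_apply]
        refine (norm_sum_le _ _).trans ?_
        refine Finset.sum_le_sum fun j _ => ?_
        refine (norm_mul_le _ _).trans ?_
        rw [norm_star, mul_comm]
        exact mul_le_mul_of_nonneg_left (norm_apply_le_norm v j) (norm_nonneg _)
    _ = (∑ i, ∑ j, ‖M i j‖) * ‖v‖ := by rw [Finset.sum_mul]; simp [Finset.sum_mul]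

/-- The continuous linear action of a matrix on the C*-module. -/
def opCLM (M : Matrix ι ι B) : E →L[ℂ] E :=
  LinearMap.mkContinuous (opL M) (∑ i, ∑ j, ‖M i j‖) (opL_norm_bound M)

@[simp] lemma opCLM_apply (M : Matrix ι ι B) (v : E) (i : ι) :
    opCLM M v i = ∑ j, v j * star (M i j) := rfl

lemma opCLM_norm_le (M : Matrix ι ι B) : ‖opCLM M‖ ≤ ∑ i, ∑ j, ‖M i j‖ :=
  LinearMap.mkContinuous_norm_le _
    (Finset.sum_nonneg fun _ _ => Finset.sum_nonneg fun _ _ => norm_nonneg _) _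

lemma opCLM_add (M N : Matrix ι ι B) : opCLM (M + N) = opCLM M + opCLM N := by
  ext v i
  simp [Matrix.add_apply, mul_add, Finset.sum_add_distrib]

lemma opCLM_zero : opCLM (0 : Matrix ι ι B) = 0 := by
  ext v i
  simp

lemma opCLM_neg (M : Matrix ι ι B) : opCLM (-M) = -(opCLM M) := by
  ext v i
  simp [Matrix.neg_apply]

lemma opCLM_smul (c : ℂ) (M : Matrix ι ι B) : opCLM (c • M) = (starRingEnd ℂ c) • opCLM M := by
  ext v i
  simp [Matrix.smul_apply, star_smul, mul_smul_comm, Finset.smul_sum]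

lemma opCLM_mul (M N : Matrix ι ι B) : opCLM (M * N) = (opCLM M).comp (opCLM N) := by
  ext v i
  change (Matrix.vecMul _ (M * N)ᴴ) i = (Matrix.vecMul (Matrix.vecMul _ Nᴴ) Mᴴ) i
  rw [Matrix.conjTranspose_mul, Matrix.vecMul_vecMul]

/-- basis vector -/
def delta (j : ι) (b : B) : E := (WithCStarModule.equiv _ _).symm (Pi.single j b)

lemma opCLM_delta (M : Matrix ι ι B) (j : ι) (i : ι) :
    opCLM M (delta j 1) i = star (M i j) := by
  change (Matrix.vecMul (Pi.single j 1) Mᴴ) i = star (M i j)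
  simp [Matrix.vecMul, dotProduct, Pi.single_apply]

lemma norm_delta_one_le [Nontrivial B] (j : ι) : ‖(delta (B := B) j 1 : E)‖ ≤ 1 := by
  rw [delta, WithCStarModule.norm_single, norm_one]

lemma entry_norm_le_opCLM [Nontrivial B] (M : Matrix ι ι B) (i j : ι) :
    ‖M i j‖ ≤ ‖opCLM M‖ := by
  calc ‖M i j‖ = ‖opCLM M (delta j 1) i‖ := by rw [opCLM_delta, norm_star]
    _ ≤ ‖opCLM M (delta j 1)‖ := norm_apply_le_norm _ i
    _ ≤ ‖opCLM M‖ * ‖(delta (B := B) j 1 : E)‖ := (opCLM M).le_opNorm _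
    _ ≤ ‖opCLM M‖ * 1 :=
        mul_le_mul_of_nonneg_left (norm_delta_one_le j) (ContinuousLinearMap.opNorm_nonneg _)
    _ = ‖opCLM M‖ := mul_one _

section Instances
variable [Nontrivial B]

noncomputable instance : NormedAddCommGroup (CSM ι B) :=
  AddGroupNorm.toNormedAddCommGroup
    { toFun := fun M => ‖opCLM (toMatrix M)‖
      map_zero' := by
        show ‖opCLM (toMatrix (0 : CSM ι B))‖ = 0
        rw [toMatrix_zero, opCLM_zero]
        exact ContinuousLinearMap.opNorm_zero
      add_le' := fun M N => by
        show ‖opCLM (toMatrix (M + N))‖ ≤ ‖opCLM (toMatrix M)‖ + ‖opCLM (toMatrix N)‖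
        rw [show toMatrix (M + N) = toMatrix M + toMatrix N from rfl, opCLM_add]
        exact ContinuousLinearMap.opNorm_add_le _ _
      neg' := fun M => by
        show ‖opCLM (toMatrix (-M))‖ = ‖opCLM (toMatrix M)‖
        rw [show toMatrix (-M) = -(toMatrix M) from rfl, opCLM_neg]
        exact ContinuousLinearMap.opNorm_neg _
      eq_zero_of_map_eq_zero' := fun M h => by
        have h0 : opCLM (toMatrix M) = 0 := (ContinuousLinearMap.opNorm_zero_iff _).mp h
        show toMatrix M = 0
        ext i j
        have := entry_norm_le_opCLM (toMatrix M) i j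
        rw [h0, ContinuousLinearMap.opNorm_zero] at this
        simpa using le_antisymm this (norm_nonneg _) }

lemma norm_def (M : CSM ι B) : ‖M‖ = ‖opCLM (toMatrix M)‖ := rfl

lemma entry_norm_le [Nontrivial B] (M : CSM ι B) (i j : ι) : ‖toMatrix M i j‖ ≤ ‖M‖ :=
  entry_norm_le_opCLM _ i j

lemma norm_le_sum_entries (M : CSM ι B) : ‖M‖ ≤ ∑ i, ∑ j, ‖toMatrix M i j‖ :=
  opCLM_norm_le _

noncomputable instance : NormedRing (CSM ι B) where
  dist_eq := fun M N => rfl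
  norm_mul_le := fun M N => by
    rw [norm_def, norm_def, norm_def, toMatrix_mul, opCLM_mul]
    exact ContinuousLinearMap.opNorm_comp_le _ _

noncomputable instance : NormedAlgebra ℂ (CSM ι B) where
  norm_smul_le c M := by
    rw [norm_def, norm_def, show toMatrix (c • M) = c • toMatrix M from rfl, opCLM_smul]
    exact (ContinuousLinearMap.opNorm_smul_le _ _).trans_eq (by rw [Complex.norm_conj])

lemma adj_inner (M : Matrix ι ι B) (v w : E) :
    ⟪opCLM M v, w⟫ = ⟪v, opCLM Mᴴ w⟫ := by
  rw [pi_inner, pi_inner]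
  simp only [WithCStarModule.inner_def, opCLM_apply, Matrix.conjTranspose_apply, star_star]
  simp only [star_sum, star_mul, star_star, Finset.sum_mul, Finset.mul_sum, mul_assoc]
  rw [Finset.sum_comm]

lemma key_ineq (M : CSM ι B) (v : E) :
    ‖opCLM (toMatrix M) v‖ ^ 2 ≤ ‖star M * M‖ * ‖v‖ ^ 2 := by
  have h1 : ‖opCLM (toMatrix M) v‖ ^ 2 = ‖⟪opCLM (toMatrix M) v, opCLM (toMatrix M) v⟫‖ :=
    norm_sq_eq B
  have hadj : ⟪opCLM (toMatrix M) v, opCLM (toMatrix M) v⟫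
      = ⟪v, opCLM (toMatrix (star M * M)) v⟫ := by
    rw [adj_inner, toMatrix_mul, toMatrix_star, opCLM_mul]
    rfl
  have h2 : ‖⟪v, opCLM (toMatrix (star M * M)) v⟫‖
      ≤ ‖v‖ * ‖opCLM (toMatrix (star M * M)) v‖ := norm_inner_le _
  have h3 : ‖opCLM (toMatrix (star M * M)) v‖
      ≤ ‖opCLM (toMatrix (star M * M))‖ * ‖v‖ := (opCLM _).le_opNorm v
  have h4 : ‖opCLM (toMatrix (star M * M))‖ = ‖star M * M‖ := rfl
  rw [h1, hadj]
  calc ‖⟪v, opCLM (toMatrix (star M * M)) v⟫‖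
      ≤ ‖v‖ * (‖star M * M‖ * ‖v‖) := by
        refine h2.trans ?_
        rw [← h4]
        exact mul_le_mul_of_nonneg_left h3 (norm_nonneg _)
    _ = ‖star M * M‖ * ‖v‖ ^ 2 := by ring

instance : CStarRing (CSM ι B) where
  norm_mul_self_le M := by
    have hb : ‖opCLM (toMatrix M)‖ ≤ Real.sqrt ‖star M * M‖ := by
      refine ContinuousLinearMap.opNorm_le_bound _ (Real.sqrt_nonneg _) fun v => ?_
      have h2 := key_ineq M v
      nlinarith [Real.sq_sqrt (norm_nonneg (star M * M)), norm_nonneg (opCLM (toMatrix M) v),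
        Real.sqrt_nonneg ‖star M * M‖, norm_nonneg v,
        mul_nonneg (Real.sqrt_nonneg ‖star M * M‖) (norm_nonneg v)]
    have h5 : ‖M‖ = ‖opCLM (toMatrix M)‖ := rfl
    rw [h5]
    nlinarith [hb, Real.sq_sqrt (norm_nonneg (star M * M)),
      ContinuousLinearMap.opNorm_nonneg (opCLM (toMatrix M)), Real.sqrt_nonneg ‖star M * M‖]


lemma entry_lipschitz (i j : ι) (M N : CSM ι B) :
    dist (toMatrix M i j) (toMatrix N i j) ≤ dist M N := by
  rw [dist_eq_norm, dist_eq_norm]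
  have : toMatrix M i j - toMatrix N i j = toMatrix (M - N) i j := rfl
  rw [this]
  exact entry_norm_le (M - N) i j

instance : CompleteSpace (CSM ι B) := by
  refine Metric.complete_of_cauchySeq_tendsto fun u hu => ?_
  -- entrywise limits
  have hentry : ∀ i j, ∃ b : B, Filter.Tendsto (fun n => toMatrix (u n) i j) Filter.atTop (nhds b) := by
    intro i j
    refine cauchySeq_tendsto_of_complete ?_
    rw [Metric.cauchySeq_iff] at hu ⊢
    intro ε hε
    obtain ⟨N0, hN0⟩ := hu ε hε
    exact ⟨N0, fun m hm n hn => lt_of_le_of_lt (entry_lipschitz i j (u m) (u n)) (hN0 m hm n hn)⟩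
  choose L hL using hentry
  refine ⟨of (Matrix.of fun i j => L i j), ?_⟩
  rw [← tendsto_sub_nhds_zero_iff]
  have hbound : ∀ n, ‖u n - of (Matrix.of fun i j => L i j)‖
      ≤ ∑ i, ∑ j, ‖toMatrix (u n) i j - L i j‖ := by
    intro n
    refine (norm_le_sum_entries _).trans ?_
    exact le_of_eq rfl
  have htend : Filter.Tendsto
      (fun n => ∑ i, ∑ j, ‖toMatrix (u n) i j - L i j‖) Filter.atTop (nhds 0) := by
    have : ∀ i j, Filter.Tendsto (fun n => ‖toMatrix (u n) i j - L i j‖) Filter.atTop (nhds 0) := by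
      intro i j
      have := (hL i j).sub_const (L i j)
      simpa using this.norm
    have := Filter.Tendsto.congr (fun n => rfl)
      (tendsto_finset_sum Finset.univ fun i _ =>
        tendsto_finset_sum Finset.univ fun j _ => this i j)
    simpa using this
  rw [tendsto_zero_iff_norm_tendsto_zero]
  exact squeeze_zero (fun n => norm_nonneg _) hbound htend

noncomputable instance : CStarAlgebra (CSM ι B) where

end Instances

section Order

/-- The positive cone: the additive submonoid generated by `star s * s`. -/
def posCone (ι B : Type*) [Fintype ι] [DecidableEq ι] [CStarAlgebra B] : AddSubmonoid (CSM ι B) :=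
  AddSubmonoid.closure (Set.range fun s : CSM ι B => star s * s)

lemma posCone_diag {p : CSM ι B} (hp : p ∈ posCone ι B) :
    (∀ j, 0 ≤ toMatrix p j j) ∧ ((∀ j, toMatrix p j j = 0) → p = 0) := by
  induction hp using AddSubmonoid.closure_induction with
  | mem s hs =>
    obtain ⟨s, rfl⟩ := hs
    constructor
    · intro j
      have : toMatrix (star s * s) j j = ∑ i, star (toMatrix s i j) * toMatrix s i j := by
        simp [Matrix.mul_apply, Matrix.conjTranspose_apply]
      rw [this]
      exact Finset.sum_nonneg fun i _ => star_mul_self_nonneg _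
    · intro h
      have hz : ∀ i j, toMatrix s i j = 0 := by
        intro i j
        have hjj := h j
        have hsum : ∑ i, star (toMatrix s i j) * toMatrix s i j = 0 := by
          rw [← hjj]; simp [Matrix.mul_apply, Matrix.conjTranspose_apply]
        have := (Finset.sum_eq_zero_iff_of_nonneg
          (fun i _ => star_mul_self_nonneg (toMatrix s i j))).mp hsum i (Finset.mem_univ i)
        exact (CStarRing.star_mul_self_eq_zero_iff _).mp this
      have hs0 : s = 0 := by
        show toMatrix s = 0
        ext i j
        exact hz i j
      rw [hs0]
      simp
  | zero => exact ⟨fun j => le_refl 0, fun _ => rfl⟩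
  | add p q hp hq ihp ihq =>
    constructor
    · intro j
      have : toMatrix (p + q) j j = toMatrix p j j + toMatrix q j j := rfl
      rw [this]
      exact add_nonneg (ihp.1 j) (ihq.1 j)
    · intro h
      have hsplit : ∀ j, toMatrix p j j = 0 ∧ toMatrix q j j = 0 := by
        intro j
        have : toMatrix p j j + toMatrix q j j = 0 := h j
        exact (add_eq_zero_iff_of_nonneg (ihp.1 j) (ihq.1 j)).mp this
      rw [ihp.2 (fun j => (hsplit j).1), ihq.2 (fun j => (hsplit j).2), add_zero]

instance : PartialOrder (CSM ι B) where
  le M N := N - M ∈ posCone ι B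
  le_refl M := by
    show M - M ∈ posCone ι B
    rw [sub_self]
    exact (posCone ι B).zero_mem
  le_trans M N P hMN hNP := by
    show P - M ∈ posCone ι B
    have := (posCone ι B).add_mem hNP hMN
    rwa [sub_add_sub_cancel] at this
  le_antisymm M N hMN hNM := by
    have h1 := posCone_diag hMN
    have h2 := posCone_diag hNM
    have hdiag : ∀ j, toMatrix (N - M) j j = 0 := by
      intro j
      have ha := h1.1 j
      have hb := h2.1 j
      have : toMatrix (M - N) j j = -(toMatrix (N - M) j j) := by
        show (toMatrix M - toMatrix N) j j = -((toMatrix N - toMatrix M) j j)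
        simp [Matrix.sub_apply]
      rw [this] at hb
      have := neg_nonneg.mp hb
      exact le_antisymm this ha
    have := h1.2 hdiag
    have : N - M = 0 := this
    have := sub_eq_zero.mp this
    exact this.symm

lemma le_def (M N : CSM ι B) : M ≤ N ↔ N - M ∈ posCone ι B := Iff.rfl

instance : StarOrderedRing (CSM ι B) where
  le_iff M N := by
    rw [le_def]
    constructor
    · intro h
      exact ⟨N - M, h, by rw [add_sub_cancel]⟩
    · rintro ⟨p, hp, rfl⟩
      rwa [add_sub_cancel_left]

end Order


end Norm

section MatPosLemmas

lemma matPos_of_subsingleton (hB : Subsingleton B) (M : Matrix ι ι B) : MatPos M :=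
  ⟨0, by ext i j; exact Subsingleton.elim _ _⟩

variable [Nontrivial B]

lemma matPos_iff_nonneg (M : Matrix ι ι B) : MatPos M ↔ 0 ≤ CSM.of M := by
  constructor
  · rintro ⟨N, rfl⟩
    exact star_mul_self_nonneg (CSM.of N)
  · intro h
    refine ⟨CSM.toMatrix (CFC.sqrt (CSM.of M)), ?_⟩
    have h1 : CFC.sqrt (CSM.of M) * CFC.sqrt (CSM.of M) = CSM.of M :=
      CFC.sqrt_mul_sqrt_self (CSM.of M) h
    have h2 : IsSelfAdjoint (CFC.sqrt (CSM.of M)) :=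
      IsSelfAdjoint.of_nonneg (CFC.sqrt_nonneg (a := CSM.of M))
    have h3 : star (CFC.sqrt (CSM.of M)) * CFC.sqrt (CSM.of M) = CSM.of M := by
      rw [h2.star_eq, h1]
    exact congrArg CSM.toMatrix h3.symm

lemma matPos_sum {κ : Type*} (s : Finset κ) (f : κ → Matrix ι ι B)
    (h : ∀ w ∈ s, MatPos (f w)) : MatPos (∑ w ∈ s, f w) := by
  rw [matPos_iff_nonneg]
  have heq : CSM.of (∑ w ∈ s, f w) = ∑ w ∈ s, CSM.of (f w) := rfl
  rw [heq]
  exact Finset.sum_nonneg fun w hw => (matPos_iff_nonneg (f w)).mp (h w hw)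

lemma matPos_rect {κ : Type*} [Fintype κ] (Q : Matrix κ ι B) : MatPos (Qᴴ * Q) := by
  rcases isEmpty_or_nonempty ι with hι | hι
  · exact ⟨0, by ext i j; exact isEmptyElim i⟩
  · obtain ⟨i₀⟩ := hι
    have hdec : Qᴴ * Q = ∑ w : κ, ((Matrix.of fun i j => if i = i₀ then Q w j else 0)ᴴ *
        (Matrix.of fun i j => if i = i₀ then Q w j else 0)) := by
      ext i j
      rw [Matrix.mul_apply, Matrix.sum_apply]
      refine Finset.sum_congr rfl fun w _ => ?_
      rw [Matrix.mul_apply, Finset.sum_eq_single i₀]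
      · simp [Matrix.conjTranspose_apply]
      · intro l _ hl
        simp [Matrix.conjTranspose_apply, hl]
      · intro hmem
        exact absurd (Finset.mem_univ i₀) hmem
    rw [hdec]
    exact matPos_sum Finset.univ _ fun w _ => ⟨_, rfl⟩

lemma matPos_diag_nonneg {M : Matrix ι ι B} (h : MatPos M) (j : ι) : 0 ≤ M j j := by
  obtain ⟨N, rfl⟩ := h
  rw [Matrix.mul_apply]
  exact Finset.sum_nonneg fun i _ => by
    rw [Matrix.conjTranspose_apply]
    exact star_mul_self_nonneg _

lemma matPos_conj {κ : Type*} [Fintype κ] [DecidableEq κ] {M : Matrix ι ι B}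
    (h : MatPos M) (C : Matrix ι κ B) : MatPos (Cᴴ * M * C) := by
  obtain ⟨N, rfl⟩ := h
  have : Cᴴ * (Nᴴ * N) * C = (N * C)ᴴ * (N * C) := by
    rw [Matrix.conjTranspose_mul, ← Matrix.mul_assoc, Matrix.mul_assoc (Cᴴ * Nᴴ)]
  rw [this]
  exact matPos_rect (N * C)

end MatPosLemmas


section Forms
variable [Nontrivial B]

lemma matPos_of_forms (S : Matrix ι ι B)
    (h : ∀ v : ι → B, 0 ≤ ∑ i, ∑ j, star (v i) * S i j * v j) : MatPos S := by
  classical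
  set Hf : (ι → B) → (ι → B) → B := fun v w => ∑ i, ∑ j, star (v i) * S i j * w j with hHf
  have hQsa : ∀ u, IsSelfAdjoint (Hf u u) := fun u => IsSelfAdjoint.of_nonneg (h u)
  have hexp : ∀ v w : ι → B, Hf (v + w) (v + w) = Hf v v + Hf v w + Hf w v + Hf w w := by
    intro v w
    simp only [hHf, Pi.add_apply, star_add, add_mul, mul_add, Finset.sum_add_distrib]
    abel
  have hsmulr : ∀ (c : ℂ) (v w : ι → B), Hf v (c • w) = c • Hf v w := by
    intro c v w
    simp only [hHf, Pi.smul_apply, mul_smul_comm, Finset.smul_sum]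
  have hsmull : ∀ (c : ℂ) (v w : ι → B), Hf (c • v) w = (starRingEnd ℂ c) • Hf v w := by
    intro c v w
    simp only [hHf, Pi.smul_apply, star_smul, smul_mul_assoc, Finset.smul_sum]
    rfl
  have hsa : ∀ v w, star (Hf v w) = Hf w v := by
    intro v w
    have h1 : star (Hf v w) + star (Hf w v) = Hf v w + Hf w v := by
      have hsum : Hf v w + Hf w v = Hf (v + w) (v + w) - Hf v v - Hf w w := by
        rw [hexp]; abel
      have := ((hQsa (v + w)).sub (hQsa v)).sub (hQsa w)
      rw [← hsum] at this
      rw [← star_add]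
      exact this
    have h2 : star (Hf v (Complex.I • w) + Hf (Complex.I • w) v)
        = Hf v (Complex.I • w) + Hf (Complex.I • w) v := by
      have hsum : Hf v (Complex.I • w) + Hf (Complex.I • w) v
          = Hf (v + Complex.I • w) (v + Complex.I • w) - Hf v v
            - Hf (Complex.I • w) (Complex.I • w) := by
        rw [hexp]; abel
      rw [hsum]
      exact ((hQsa _).sub (hQsa _)).sub (hQsa _)
    rw [hsmulr, hsmull, star_add, star_smul, star_smul] at h2
    set P := Hf v w
    set Q := Hf w v
    have e2 : (-Complex.I) • star P + Complex.I • star Q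
        = Complex.I • P + (-Complex.I) • Q := by
      simpa [Complex.conj_I, RingHom.id_apply] using h2
    have e3 : star P - star Q = Q - P := by
      have h9 := congrArg (fun z => Complex.I • z) e2
      simp only [smul_add, smul_smul, mul_neg, Complex.I_mul_I, neg_neg, one_smul,
        neg_one_smul] at h9
      rw [sub_eq_add_neg, h9, neg_add_eq_sub]
    have e4 : star P + star P = Q + Q := by
      calc star P + star P = star P + star Q + (star P - star Q) := by abel
        _ = P + Q + (Q - P) := by rw [h1, e3]
        _ = Q + Q := by abel
    show star P = Q
    refine smul_right_injective B (two_ne_zero (α := ℂ)) ?_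
    show (2:ℂ) • star P = (2:ℂ) • Q
    rw [two_smul, two_smul]
    exact e4
  have hentry2 : ∀ i j, Hf (Pi.single i 1) (Pi.single j 1) = S i j := by
    intro i j
    simp only [hHf]
    rw [Finset.sum_eq_single i]
    · rw [Finset.sum_eq_single j] <;> simp_all
    · intro l _ hl
      simp [Pi.single_apply, hl]
    · intro hmem
      exact absurd (Finset.mem_univ i) hmem
  have hSsa : ∀ i j, star (S i j) = S j i := by
    intro i j
    rw [← hentry2 i j, ← hentry2 j i, hsa]
  -- pass to the C*-algebra CSM
  set Sd := CSM.of S with hSdDef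
  have hSdsa : IsSelfAdjoint Sd := by
    show star Sd = Sd
    show CSM.toMatrix (star Sd) = CSM.toMatrix Sd
    rw [CSM.toMatrix_star]
    ext i j
    rw [Matrix.conjTranspose_apply]
    exact hSsa j i
  set P := Sd⁻ with hPdef
  have hP : 0 ≤ P := CFC.negPart_nonneg Sd
  have hPsa : IsSelfAdjoint P := IsSelfAdjoint.of_nonneg hP
  have hposneg : Sd⁺ * P = 0 := CFC.posPart_mul_negPart Sd
  have hPpos : P * Sd⁺ = 0 := by
    have hst := congrArg star hposneg
    rwa [star_mul, star_zero, hPsa.star_eq,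
      (IsSelfAdjoint.of_nonneg (CFC.posPart_nonneg Sd)).star_eq] at hst
  have hdecomp : Sd = Sd⁺ - P := (CFC.posPart_sub_negPart Sd hSdsa).symm
  have hPSP : P * Sd * P = -(P * P * P) := by
    have h1 : P * Sd * P = P * (Sd⁺ - P) * P := congrArg (fun z => P * z * P) hdecomp
    rw [h1, mul_sub, sub_mul, hPpos, zero_mul, zero_sub]
  set p := CSM.toMatrix P with hpdef
  have hpsa : pᴴ = p := by
    rw [hpdef, ← CSM.toMatrix_star, hPsa.star_eq]
  obtain ⟨b, hb⟩ := (matPos_iff_nonneg p).mpr hP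
  have hcube : p * p * p = (b * p)ᴴ * (b * p) := by
    calc p * p * p = p * (bᴴ * b) * p := by rw [← hb]
      _ = (p * bᴴ) * (b * p) := by rw [← Matrix.mul_assoc, Matrix.mul_assoc (p * bᴴ)]
      _ = (pᴴ * bᴴ) * (b * p) := by rw [hpsa]
      _ = (b * p)ᴴ * (b * p) := by rw [Matrix.conjTranspose_mul]
  have hpanti : ∀ i ρ', star (p i ρ') = p ρ' i := by
    intro i ρ'
    conv_rhs => rw [← hpsa]
    rfl
  have hdiagzero : ∀ ρ, (p * p * p) ρ ρ = 0 := by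
    intro ρ
    have h5 : 0 ≤ (p * p * p) ρ ρ := matPos_diag_nonneg ⟨b * p, hcube⟩ ρ
    have hform : 0 ≤ ∑ i, ∑ j, star (p i ρ) * S i j * p j ρ := h _
    have hPSPentry : CSM.toMatrix (P * Sd * P) ρ ρ
        = ∑ i, ∑ j, star (p i ρ) * S i j * p j ρ := by
      have step1 : CSM.toMatrix (P * Sd * P) ρ ρ = ∑ j, (∑ i, p ρ i * S i j) * p j ρ := by
        rw [CSM.toMatrix_mul, CSM.toMatrix_mul, Matrix.mul_apply]
        exact Finset.sum_congr rfl fun j _ => by rw [Matrix.mul_apply]; rfl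
      rw [step1]
      calc ∑ j, (∑ i, p ρ i * S i j) * p j ρ
          = ∑ j, ∑ i, p ρ i * S i j * p j ρ :=
            Finset.sum_congr rfl fun j _ => by rw [Finset.sum_mul]
        _ = ∑ i, ∑ j, p ρ i * S i j * p j ρ := Finset.sum_comm
        _ = ∑ i, ∑ j, star (p i ρ) * S i j * p j ρ := by
            refine Finset.sum_congr rfl fun i _ => Finset.sum_congr rfl fun j _ => ?_
            rw [hpanti]
    have h6 : 0 ≤ -((p * p * p) ρ ρ) := by
      have h7 : 0 ≤ CSM.toMatrix (P * Sd * P) ρ ρ := by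
        rw [hPSPentry]
        exact hform
      rw [hPSP] at h7
      have h8 : CSM.toMatrix (-(P * P * P)) ρ ρ = -((p * p * p) ρ ρ) := rfl
      rw [h8] at h7
      exact h7
    exact le_antisymm (by simpa using neg_nonneg.mp h6) h5
  have hc0 : b * p = 0 := by
    ext i ρ
    have hcol := hdiagzero ρ
    rw [hcube, Matrix.mul_apply] at hcol
    have hz := (Finset.sum_eq_zero_iff_of_nonneg (fun l _ => by
        rw [Matrix.conjTranspose_apply]
        exact star_mul_self_nonneg _)).mp hcol i (Finset.mem_univ i)
    rw [Matrix.conjTranspose_apply] at hz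
    exact (CStarRing.star_mul_self_eq_zero_iff _).mp hz
  have hpppz : p * p * p = 0 := by
    rw [hcube, hc0]
    simp
  have hppp : P * P * P = 0 := by
    have h9 : P * P * P = CSM.of (p * p * p) := rfl
    rw [h9, hpppz]
    rfl
  have hPP : P * P = 0 := by
    have h4 : (P * P) * (P * P) = 0 := by
      have : P * P * (P * P) = (P * P * P) * P := by noncomm_ring
      rw [this, hppp, zero_mul]
    have hstar : star (P * P) = P * P := by rw [star_mul, hPsa.star_eq]
    have hnorm : ‖P * P‖ * ‖P * P‖ = 0 := by
      calc ‖P * P‖ * ‖P * P‖ = ‖star (P * P) * (P * P)‖ := CStarRing.norm_star_mul_self.symm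
        _ = 0 := by rw [hstar, h4, norm_zero]
    exact norm_eq_zero.mp (mul_self_eq_zero.mp hnorm)
  have hPzero : P = 0 := by
    have hnorm : ‖P‖ * ‖P‖ = 0 := by
      calc ‖P‖ * ‖P‖ = ‖star P * P‖ := CStarRing.norm_star_mul_self.symm
        _ = 0 := by rw [hPsa.star_eq, hPP, norm_zero]
    exact norm_eq_zero.mp (mul_self_eq_zero.mp hnorm)
  have hfinal : 0 ≤ Sd := by
    rw [hdecomp, hPzero, sub_zero]
    exact CFC.posPart_nonneg Sd
  exact (matPos_iff_nonneg S).mpr hfinal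

end Forms

end CSM
end MKCP


namespace MKCP2

open MKCP MKCP.CSM

variable {X : Type*}
variable {A : Type*} [CStarAlgebra A]
variable {B : Type*} [CStarAlgebra B] [PartialOrder B] [StarOrderedRing B]

/-- entry of a triple product -/
lemma triple_entry {ι κ : Type*} [Fintype ι]
    (Cl : Matrix ι κ B) (T : Matrix ι ι B) (Cr : Matrix ι κ B) (s t : κ) :
    (Clᴴ * T * Cr) s t = ∑ l, ∑ μ, star (Cl l s) * T l μ * Cr μ t := by
  rw [Matrix.mul_apply]
  have hCT : ∀ μ, (Clᴴ * T) s μ = ∑ l, star (Cl l s) * T l μ := by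
    intro μ
    rw [Matrix.mul_apply]
    exact Finset.sum_congr rfl fun l _ => by rw [Matrix.conjTranspose_apply]
  calc ∑ μ, (Clᴴ * T) s μ * Cr μ t
      = ∑ μ, ∑ l, star (Cl l s) * T l μ * Cr μ t := by
        refine Finset.sum_congr rfl fun μ _ => ?_
        rw [hCT μ, Finset.sum_mul]
    _ = ∑ l, ∑ μ, star (Cl l s) * T l μ * Cr μ t := Finset.sum_comm

/-- the four entry kernels of the 2×2 matrix kernel -/
noncomputable def kerEntry (k L₁ L₂ : X → X → A →L[ℂ] B) :
    Fin 2 → Fin 2 → (X → X → A →L[ℂ] B) := ![![L₁, k], ![kadj k, L₂]]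

lemma Kentry (k L₁ L₂ : X → X → A →L[ℂ] B) (s t : Fin 2) (x y : X) (a : A) :
    (!![L₁ x y a, k x y a; kadj k x y a, L₂ x y a] : Matrix (Fin 2) (Fin 2) B) s t
      = kerEntry k L₁ L₂ s t x y a := by
  fin_cases s <;> fin_cases t <;> simp [kerEntry]

lemma amplEq (k L₁ L₂ : X → X → A →L[ℂ] B) {n : ℕ} (x : Fin n → X) (m : ℕ)
    (M : Matrix (Fin m × Fin 2 × Fin n) (Fin m × Fin 2 × Fin n) A)
    (p q : Fin m × Fin 2 × Fin n) :
    ampl (blockMap ![![schurMap L₁ x, schurMap k x],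
        ![schurMap (kadj k) x, schurMap L₂ x]]) m M p q
      = kerEntry k L₁ L₂ p.2.1 q.2.1 (x p.2.2) (x q.2.2) (M p q) := by
  obtain ⟨pm, ps, pi⟩ := p
  obtain ⟨qm, qs, qi⟩ := q
  fin_cases ps <;> fin_cases qs <;> rfl


lemma sum_swap4 {α β γ δ M : Type*} [Fintype α] [Fintype β] [Fintype γ] [Fintype δ]
    [AddCommMonoid M] (F : α → β → γ → δ → M) :
    ∑ i, ∑ j, ∑ u, ∑ v, F i j u v = ∑ u, ∑ i, ∑ v, ∑ j, F i j u v := by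
  calc ∑ i, ∑ j, ∑ u, ∑ v, F i j u v
      = ∑ i, ∑ u, ∑ j, ∑ v, F i j u v :=
        Finset.sum_congr rfl fun i _ => Finset.sum_comm
    _ = ∑ u, ∑ i, ∑ j, ∑ v, F i j u v := Finset.sum_comm
    _ = ∑ u, ∑ i, ∑ v, ∑ j, F i j u v :=
        Finset.sum_congr rfl fun u _ => Finset.sum_congr rfl fun i _ => Finset.sum_comm

end MKCP2

/-- the 2×2 matrix kernel `[[L₁, k], [k*, L₂]]` is completely positive iff
for every finite family of points the associated 2×2 block Schur map
`M₂(M_n(A)) → M₂(M_n(B))` is completely positive. -/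
theorem matrix_kernel_cp_iff_block_schur_cp {X : Type*} {A : Type*} [CStarAlgebra A]
    {B : Type*} [CStarAlgebra B] [PartialOrder B] [StarOrderedRing B]
    (k L₁ L₂ : X → X → A →L[ℂ] B) :
    IsCPKernelM (fun x y a => !![L₁ x y a, k x y a; kadj k x y a, L₂ x y a]) ↔
    ∀ (n : ℕ) (x : Fin n → X),
      IsCPMap (blockMap ![![schurMap L₁ x, schurMap k x],
        ![schurMap (kadj k) x, schurMap L₂ x]]) := by
  classical
  rcases subsingleton_or_nontrivial B with hB | hB
  · constructor
    · intro _ n x m M _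
      exact MKCP.CSM.matPos_of_subsingleton hB _
    · intro _ n x a b
      exact MKCP.CSM.matPos_of_subsingleton hB _
  constructor
  · -- kernel CP implies block Schur maps CP
    intro hK n x m M hM
    obtain ⟨N, rfl⟩ := hM
    have hTsum : ampl (blockMap ![![schurMap L₁ x, schurMap k x],
          ![schurMap (kadj k) x, schurMap L₂ x]]) m (Nᴴ * N)
        = ∑ w : Fin m × Fin 2 × Fin n, Matrix.of (fun l μ =>
            MKCP2.kerEntry k L₁ L₂ l.2.1 μ.2.1 (x l.2.2) (x μ.2.2)
              (star (N w l) * N w μ)) := by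
      ext l μ
      rw [MKCP2.amplEq, Matrix.sum_apply]
      have hmul : (Nᴴ * N) l μ = ∑ w, star (N w l) * N w μ := by
        rw [Matrix.mul_apply]
        exact Finset.sum_congr rfl fun w _ => by rw [Matrix.conjTranspose_apply]
      rw [hmul, map_sum]
      rfl
    rw [hTsum]
    refine MKCP.CSM.matPos_sum Finset.univ _ fun w _ => ?_
    set G : Matrix ((Fin m × Fin 2 × Fin n) × Fin 2) ((Fin m × Fin 2 × Fin n) × Fin 2) B :=
      fun P Q => MKCP2.kerEntry k L₁ L₂ P.2 Q.2 (x P.1.2.2) (x Q.1.2.2)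
        (star (N w P.1) * N w Q.1) with hG
    have hGpos : MatPos G := by
      refine MKCP.CSM.matPos_of_forms _ fun v => ?_
      set e := (Fintype.equivFin (Fin m × Fin 2 × Fin n)).symm with he
      set bs : Fin (Fintype.card (Fin m × Fin 2 × Fin n)) → Matrix (Fin 2) (Fin 2) B :=
        fun r => Matrix.of fun u t => if t = 0 then v (e r, u) else 0 with hbs
      have h2 := hK (Fintype.card (Fin m × Fin 2 × Fin n)) (fun r => x (e r).2.2)
        (fun r => N w (e r)) bs
      have h3 := MKCP.CSM.matPos_diag_nonneg h2 0
      set Km : Fin (Fintype.card (Fin m × Fin 2 × Fin n))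
          → Fin (Fintype.card (Fin m × Fin 2 × Fin n)) → Matrix (Fin 2) (Fin 2) B :=
        fun r r' =>
          !![L₁ (x (e r).2.2) (x (e r').2.2) (star (N w (e r)) * N w (e r')),
             k (x (e r).2.2) (x (e r').2.2) (star (N w (e r)) * N w (e r'));
             kadj k (x (e r).2.2) (x (e r').2.2) (star (N w (e r)) * N w (e r')),
             L₂ (x (e r).2.2) (x (e r').2.2) (star (N w (e r)) * N w (e r'))] with hKm
      have h3' : 0 ≤ (∑ r, ∑ r', (bs r)ᴴ * Km r r' * bs r') 0 0 := h3
      have h6 : (∑ r, ∑ r', (bs r)ᴴ * Km r r' * bs r') 0 0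
          = ∑ r, ∑ r', ∑ u, ∑ u', star (v (e r, u))
              * G (e r, u) (e r', u') * v (e r', u') := by
        simp only [Matrix.sum_apply]
        refine Finset.sum_congr rfl fun r _ => Finset.sum_congr rfl fun r' _ => ?_
        rw [MKCP2.triple_entry]
        refine Finset.sum_congr rfl fun u _ => Finset.sum_congr rfl fun u' _ => ?_
        simp only [hKm]
        rw [MKCP2.Kentry]
        simp only [hbs, hG]
        norm_num
      have h5 : ∑ P, ∑ Q, star (v P) * G P Q * v Q
          = ∑ r, ∑ r', ∑ u, ∑ u', star (v (e r, u))
              * G (e r, u) (e r', u') * v (e r', u') := by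
        rw [Fintype.sum_prod_type,
          ← Equiv.sum_comp e (fun l => ∑ u, ∑ Q, star (v (l, u)) * G (l, u) Q * v Q)]
        have hinner : ∀ (l : Fin m × Fin 2 × Fin n) (u : Fin 2),
            ∑ Q, star (v (l, u)) * G (l, u) Q * v Q
              = ∑ r', ∑ u', star (v (l, u)) * G (l, u) (e r', u') * v (e r', u') := by
          intro l u
          rw [Fintype.sum_prod_type,
            ← Equiv.sum_comp e (fun l' => ∑ u', star (v (l, u)) * G (l, u) (l', u')
              * v (l', u'))]
        calc ∑ r, ∑ u, ∑ Q, star (v (e r, u)) * G (e r, u) Q * v Q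
            = ∑ r, ∑ u, ∑ r', ∑ u', star (v (e r, u))
                * G (e r, u) (e r', u') * v (e r', u') :=
              Finset.sum_congr rfl fun r _ => Finset.sum_congr rfl fun u _ => hinner _ u
          _ = ∑ r, ∑ r', ∑ u, ∑ u', star (v (e r, u))
                * G (e r, u) (e r', u') * v (e r', u') :=
              Finset.sum_congr rfl fun r _ => Finset.sum_comm
      rw [h5, ← h6]
      exact h3'
    set C : Matrix ((Fin m × Fin 2 × Fin n) × Fin 2) (Fin m × Fin 2 × Fin n) B :=
      fun P μ => if P.1 = μ ∧ P.2 = μ.2.1 then (1:B) else 0 with hC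
    have hconj : (Matrix.of (fun l μ =>
          MKCP2.kerEntry k L₁ L₂ l.2.1 μ.2.1 (x l.2.2) (x μ.2.2)
            (star (N w l) * N w μ)) : Matrix _ _ B) = Cᴴ * G * C := by
      ext l μ
      rw [MKCP2.triple_entry]
      rw [Finset.sum_eq_single (l, l.2.1)]
      · rw [Finset.sum_eq_single (μ, μ.2.1)]
        · simp [hC, hG]
        · intro Q _ hQ
          have hne : ¬(Q.1 = μ ∧ Q.2 = μ.2.1) := by
            intro hcon
            exact hQ (Prod.ext hcon.1 hcon.2)
          simp [hC, hne]
        · intro hmem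
          exact absurd (Finset.mem_univ _) hmem
      · intro P _ hP
        have hne : ¬(P.1 = l ∧ P.2 = l.2.1) := by
          intro hcon
          exact hP (Prod.ext hcon.1 hcon.2)
        refine Finset.sum_eq_zero fun Q _ => ?_
        simp [hC, hne]
      · intro hmem
        exact absurd (Finset.mem_univ _) hmem
    rw [hconj]
    exact MKCP.CSM.matPos_conj hGpos C
  · -- block Schur maps CP implies kernel CP
    intro h n x a b
    cases n with
    | zero =>
      refine ⟨0, ?_⟩
      simp
    | succ n' =>
      set N : Matrix (Fin 1 × Fin 2 × Fin (n' + 1)) (Fin 1 × Fin 2 × Fin (n' + 1)) A :=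
        fun w l => if w = 0 then a l.2.2 else 0 with hN
      have hT := h (n' + 1) x 1 (Nᴴ * N) ⟨N, rfl⟩
      set T := ampl (blockMap ![![schurMap L₁ x, schurMap k x],
          ![schurMap (kadj k) x, schurMap L₂ x]]) 1 (Nᴴ * N) with hTdef
      have hMentry : ∀ l μ, (Nᴴ * N) l μ = star (a l.2.2) * a μ.2.2 := by
        intro l μ
        rw [Matrix.mul_apply]
        have hsummand : ∀ w, (Nᴴ) l w * N w μ
            = if w = (0 : Fin 1 × Fin 2 × Fin (n' + 1))
                then star (a l.2.2) * a μ.2.2 else 0 := by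
          intro w
          rw [Matrix.conjTranspose_apply]
          by_cases hw : w = (0 : Fin 1 × Fin 2 × Fin (n' + 1)) <;> simp [hN, hw]
        rw [Finset.sum_congr rfl fun w _ => hsummand w, Finset.sum_ite_eq']
        simp
      have hTentry : ∀ l μ, T l μ
          = MKCP2.kerEntry k L₁ L₂ l.2.1 μ.2.1 (x l.2.2) (x μ.2.2)
              (star (a l.2.2) * a μ.2.2) := by
        intro l μ
        rw [hTdef, MKCP2.amplEq, hMentry]
      set C : Matrix (Fin 1 × Fin 2 × Fin (n' + 1)) (Fin 2) B :=
        fun l t => b l.2.2 l.2.1 t with hC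
      set Km : Fin (n' + 1) → Fin (n' + 1) → Matrix (Fin 2) (Fin 2) B := fun i j =>
        !![L₁ (x i) (x j) (star (a i) * a j), k (x i) (x j) (star (a i) * a j);
           kadj k (x i) (x j) (star (a i) * a j), L₂ (x i) (x j) (star (a i) * a j)] with hKm
      show MatPos (∑ i, ∑ j, (b i)ᴴ * Km i j * b j)
      have key : (∑ i, ∑ j, (b i)ᴴ * Km i j * b j) = Cᴴ * T * C := by
        ext s t
        simp only [Matrix.sum_apply]
        calc ∑ i, ∑ j, ((b i)ᴴ * Km i j * b j) s t
            = ∑ i, ∑ j, ∑ u, ∑ v, star (b i u s)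
                * MKCP2.kerEntry k L₁ L₂ u v (x i) (x j) (star (a i) * a j) * b j v t := by
              refine Finset.sum_congr rfl fun i _ => Finset.sum_congr rfl fun j _ => ?_
              rw [MKCP2.triple_entry]
              refine Finset.sum_congr rfl fun u _ => Finset.sum_congr rfl fun v _ => ?_
              simp only [hKm, MKCP2.Kentry]
          _ = ∑ u, ∑ i, ∑ v, ∑ j, star (b i u s)
                * MKCP2.kerEntry k L₁ L₂ u v (x i) (x j) (star (a i) * a j) * b j v t :=
              MKCP2.sum_swap4 _
          _ = (Cᴴ * T * C) s t := by
              rw [MKCP2.triple_entry, Fintype.sum_prod_type, Fin.sum_univ_one,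
                Fintype.sum_prod_type]
              refine Finset.sum_congr rfl fun u _ => Finset.sum_congr rfl fun i _ => ?_
              rw [Fintype.sum_prod_type, Fin.sum_univ_one, Fintype.sum_prod_type]
              refine Finset.sum_congr rfl fun v _ => Finset.sum_congr rfl fun j _ => ?_
              rw [hTentry]
      rw [key]
      exact MKCP.CSM.matPos_conj hT C
end

section
/- Let A be a unital C*-algebra, H a Hilbert space, and k a kernel on X with values in L(A, L(H)). Let F = {x_1,…,x_n} be a finite subset of X and suppose there exist completely positive maps P₁, P₂ : M_n(A) → M_n(L(H)) such that the map M₂(M_n(A)) → M₂(M_n(L(H))) sending [[A, B],[C, D]] to [[P₁(A), S_{k_F}(B)],[S_{k_F}*(C), P₂(D)]] is completely positive, where S_{k_F} is the Schur map (a_{ij}) ↦ (k(x_i,x_j)[a_{ij}]) and S_{k_F}*(C) = (S_{k_F}(C*))*. Then there exist completely positive kernels L₁, L₂ on F with values in L(A, L(H)) such that the map M₂(M_n(A)) → M₂(M_n(L(H))) sending [[A, B],[C, D]] to [[S_{L₁}(A), S_{k_F}(B)],[S_{k_F}*(C), S_{L₂}(D)]] is completely positive. -/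
set_option linter.unusedSectionVars false
set_option synthInstance.maxHeartbeats 1000000
set_option maxHeartbeats 1600000



open scoped ComplexOrder InnerProductSpace Matrix

namespace CPAux

variable {H : Type*} [NormedAddCommGroup H] [InnerProductSpace ℂ H] [CompleteSpace H]

variable (H) in
abbrev PiH (ι : Type*) : Type _ := PiLp 2 (fun _ : ι => H)

variable {ι κ μ : Type*} [Fintype ι] [DecidableEq ι] [Fintype κ] [DecidableEq κ]
  [Fintype μ] [DecidableEq μ]

instance piH_completeSpace : CompleteSpace (PiH H ι) :=
  inferInstance

noncomputable def sngl (j : ι) : H →L[ℂ] PiH H ι :=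
  (PiLp.continuousLinearEquiv 2 ℂ (fun _ : ι => H)).symm.toContinuousLinearMap ∘L
    ContinuousLinearMap.pi (fun k : ι => if k = j then ContinuousLinearMap.id ℂ H else 0)

@[simp] lemma sngl_apply (j : ι) (h : H) (k : ι) :
    sngl (H := H) j h k = if k = j then h else 0 := by
  simp [sngl]
  split <;> rfl

lemma piH_sum_apply {α : Type*} (s : Finset α) (f : α → PiH H ι) (i : ι) :
    (∑ a ∈ s, f a) i = ∑ a ∈ s, f a i := by
  exact map_sum (PiLp.proj (𝕜 := ℂ) 2 (fun _ : ι => H) i) f s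

lemma piH_ext {x y : PiH H ι} (h : ∀ i, x i = y i) : x = y := WithLp.ofLp_injective 2 (funext h)

noncomputable def toOp (P : Matrix κ ι (H →L[ℂ] H)) : PiH H ι →L[ℂ] PiH H κ :=
  ∑ r : κ, ∑ j : ι, sngl r ∘L ((P r j) ∘L (PiLp.proj (𝕜 := ℂ) 2 (fun _ : ι => H) j))

lemma toOp_apply (P : Matrix κ ι (H →L[ℂ] H)) (ξ : PiH H ι) (r : κ) :
    toOp P ξ r = ∑ j, P r j (ξ j) := by
  have h1 : toOp P ξ = ∑ r' : κ, ∑ j : ι, sngl (H := H) r' (P r' j (ξ j)) := by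
    simp [toOp, ContinuousLinearMap.sum_apply]
  rw [h1, piH_sum_apply]
  simp only [piH_sum_apply, sngl_apply]
  rw [Finset.sum_comm]
  simp


lemma toOp_mul (Q : Matrix μ κ (H →L[ℂ] H)) (P : Matrix κ ι (H →L[ℂ] H)) :
    toOp (Q * P) = toOp Q ∘L toOp P := by
  refine ContinuousLinearMap.ext fun ξ => piH_ext fun r => ?_
  rw [ContinuousLinearMap.comp_apply, toOp_apply, toOp_apply]
  simp only [Matrix.mul_apply, ContinuousLinearMap.sum_apply, ContinuousLinearMap.mul_apply,
    toOp_apply, map_sum]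
  rw [Finset.sum_comm]

lemma toOp_adjoint (P : Matrix κ ι (H →L[ℂ] H)) :
    ContinuousLinearMap.adjoint (toOp P) = toOp Pᴴ := by
  symm
  rw [ContinuousLinearMap.eq_adjoint_iff]
  intro x y
  simp only [PiLp.inner_apply, toOp_apply, Matrix.conjTranspose_apply, inner_sum, sum_inner,
    ContinuousLinearMap.star_eq_adjoint, ContinuousLinearMap.adjoint_inner_left]
  rw [Finset.sum_comm]

noncomputable def matOf (T : PiH H ι →L[ℂ] PiH H κ) : Matrix κ ι (H →L[ℂ] H) :=
  Matrix.of fun r j => (PiLp.proj (𝕜 := ℂ) 2 (fun _ : κ => H) r) ∘L T ∘L sngl j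

lemma matOf_toOp (P : Matrix κ ι (H →L[ℂ] H)) : matOf (toOp P) = P := by
  refine Matrix.ext fun r j => ContinuousLinearMap.ext fun h => ?_
  simp only [matOf, Matrix.of_apply, ContinuousLinearMap.comp_apply, PiLp.proj_apply,
    toOp_apply, sngl_apply]
  rw [Finset.sum_eq_single j]
  · simp
  · intro b _ hb
    simp [hb]
  · simp

lemma toOp_matOf (T : PiH H ι →L[ℂ] PiH H κ) : toOp (matOf T) = T := by
  refine ContinuousLinearMap.ext fun ξ => piH_ext fun r => ?_
  simp only [toOp_apply, matOf, Matrix.of_apply, ContinuousLinearMap.comp_apply,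
    PiLp.proj_apply]
  have h1 : ∑ j, T (sngl (H := H) j (ξ j)) r = T (∑ j, sngl (H := H) j (ξ j)) r := by
    rw [map_sum, piH_sum_apply]
  have h2 : (∑ j, sngl (H := H) j (ξ j)) = ξ := piH_ext fun k => by
    rw [piH_sum_apply]; simp
  rw [h1, h2]

lemma toOp_injective : Function.Injective
    (toOp (H := H) (ι := ι) (κ := κ)) := fun P Q h => by
  rw [← matOf_toOp (H := H) P, ← matOf_toOp (H := H) Q, h]

/-- Rectangular Gram matrices are `MatPos`. -/
theorem matPos_gram (P : Matrix κ ι (H →L[ℂ] H)) : MatPos (Pᴴ * P) := by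
  have hpos : (0 : PiH H ι →L[ℂ] PiH H ι) ≤
      ContinuousLinearMap.adjoint (toOp P) ∘L toOp P := by
    rw [ContinuousLinearMap.nonneg_iff_isPositive]
    have := ContinuousLinearMap.IsPositive.adjoint_conj
      (ContinuousLinearMap.isPositive_one (E := PiH H κ)) (toOp P)
    simpa [ContinuousLinearMap.one_def] using this
  set s := CFC.sqrt (ContinuousLinearMap.adjoint (toOp P) ∘L toOp P) with hs_def
  have hs : (0 : PiH H ι →L[ℂ] PiH H ι) ≤ s := CFC.sqrt_nonneg _
  have hsa : star s = s := (IsSelfAdjoint.of_nonneg hs).star_eq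
  have hss : s * s = ContinuousLinearMap.adjoint (toOp P) ∘L toOp P :=
    CFC.sqrt_mul_sqrt_self _ hpos
  refine ⟨matOf s, toOp_injective ?_⟩
  rw [toOp_mul, toOp_mul, ← toOp_adjoint, ← toOp_adjoint, toOp_matOf]
  rw [← ContinuousLinearMap.star_eq_adjoint s, hsa, ← hss]
  rfl

/-- Compressions preserve `MatPos` (over `L(H)`). -/
theorem matPos_conj {M : Matrix κ κ (H →L[ℂ] H)} (hM : MatPos M)
    (T : Matrix κ ι (H →L[ℂ] H)) : MatPos (Tᴴ * M * T) := by
  obtain ⟨N, rfl⟩ := hM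
  have : Tᴴ * (Nᴴ * N) * T = (N * T)ᴴ * (N * T) := by
    rw [Matrix.conjTranspose_mul]
    simp [Matrix.mul_assoc]
  rw [this]
  exact matPos_gram _

lemma adjoint_sngl (i : ι) :
    ContinuousLinearMap.adjoint (sngl (H := H) i) = PiLp.proj (𝕜 := ℂ) 2 (fun _ : ι => H) i := by
  symm
  rw [ContinuousLinearMap.eq_adjoint_iff]
  intro x y
  simp only [PiLp.proj_apply, PiLp.inner_apply, sngl_apply]
  rw [Finset.sum_eq_single i]
  · simp
  · intro b _ hb; simp [hb]
  · simp

/-- Norm Cauchy-Schwarz for positive matrices over `L(H)`. -/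
theorem matPos_norm_sq_le {M : Matrix ι ι (H →L[ℂ] H)} (hM : MatPos M) (i j : ι) :
    ‖M i j‖ ^ 2 ≤ ‖M i i‖ * ‖M j j‖ := by
  obtain ⟨N, rfl⟩ := hM
  set S : ι → (H →L[ℂ] PiH H ι) := fun c => toOp N ∘L sngl c with hS
  have key : ∀ a b : ι, (Nᴴ * N) a b =
      ContinuousLinearMap.adjoint (S a) ∘L S b := by
    intro a b
    have : (Nᴴ * N) a b = matOf (toOp (Nᴴ * N)) a b := by rw [matOf_toOp]
    rw [this, toOp_mul, ← toOp_adjoint]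
    simp only [matOf, Matrix.of_apply, hS]
    rw [ContinuousLinearMap.adjoint_comp, adjoint_sngl]
    rfl
  have hnorm : ∀ a b : ι, ‖(Nᴴ * N) a b‖ ≤ ‖S a‖ * ‖S b‖ := by
    intro a b
    rw [key]
    calc ‖ContinuousLinearMap.adjoint (S a) ∘L S b‖
        ≤ ‖ContinuousLinearMap.adjoint (S a)‖ * ‖S b‖ := ContinuousLinearMap.opNorm_comp_le _ _
      _ = ‖S a‖ * ‖S b‖ := by
          rw [LinearIsometryEquiv.norm_map (ContinuousLinearMap.adjoint (𝕜 := ℂ)) (S a)]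
  have hdiag : ∀ a : ι, ‖S a‖ ^ 2 = ‖(Nᴴ * N) a a‖ := by
    intro a
    rw [key, ContinuousLinearMap.norm_adjoint_comp_self, sq]
  calc ‖(Nᴴ * N) i j‖ ^ 2 ≤ (‖S i‖ * ‖S j‖) ^ 2 := by
        have h0 : (0:ℝ) ≤ ‖(Nᴴ * N) i j‖ := norm_nonneg _
        nlinarith [hnorm i j, norm_nonneg ((Nᴴ * N) i j)]
    _ = ‖S i‖ ^ 2 * ‖S j‖ ^ 2 := by ring
    _ = ‖(Nᴴ * N) i i‖ * ‖(Nᴴ * N) j j‖ := by rw [hdiag, hdiag]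

end CPAux


section Part2

variable {A : Type*} [CStarAlgebra A]
variable {B : Type*} [CStarAlgebra B] [PartialOrder B] [StarOrderedRing B]

/-- Matrix with at most one nonzero entry. -/
def basM {R : Type*} [Zero R] {ι : Type*} [DecidableEq ι] (i j : ι) (a : R) : Matrix ι ι R :=
  Matrix.of fun r c => if r = i then (if c = j then a else 0) else 0

/-- The Schur-diagonal compression of a matrix map. -/
def Sd {ι : Type*} [DecidableEq ι] (φ : Matrix ι ι A → Matrix ι ι B)
    (M : Matrix ι ι A) : Matrix ι ι B :=
  Matrix.of fun p q => φ (basM p q (M p q)) p q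

theorem quadform_nonneg {ι : Type*} [Fintype ι] {M : Matrix ι ι B} (hM : MatPos M)
    (w : ι → B) : 0 ≤ ∑ r : ι, ∑ c : ι, star (w r) * M r c * w c := by
  obtain ⟨N, rfl⟩ := hM
  have key : ∑ r : ι, ∑ c : ι, star (w r) * (Nᴴ * N) r c * w c
      = ∑ t : ι, star (∑ c : ι, N t c * w c) * (∑ c : ι, N t c * w c) := by
    have hterm : ∀ r c, star (w r) * (Nᴴ * N) r c * w c
        = ∑ t : ι, star (w r) * star (N t r) * (N t c * w c) := by
      intro r c
      rw [Matrix.mul_apply, Finset.mul_sum, Finset.sum_mul]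
      refine Finset.sum_congr rfl fun t _ => ?_
      simp only [Matrix.conjTranspose_apply]
      noncomm_ring
    simp only [hterm]
    have hswap : ∑ r : ι, ∑ c : ι, ∑ t : ι, star (w r) * star (N t r) * (N t c * w c)
        = ∑ t : ι, ∑ r : ι, ∑ c : ι, star (w r) * star (N t r) * (N t c * w c) :=
      calc ∑ r : ι, ∑ c : ι, ∑ t : ι, star (w r) * star (N t r) * (N t c * w c)
          = ∑ r : ι, ∑ t : ι, ∑ c : ι, star (w r) * star (N t r) * (N t c * w c) :=
            Finset.sum_congr rfl fun r _ => Finset.sum_comm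
        _ = ∑ t : ι, ∑ r : ι, ∑ c : ι, star (w r) * star (N t r) * (N t c * w c) :=
            Finset.sum_comm
    rw [hswap]
    refine Finset.sum_congr rfl fun t _ => ?_
    rw [star_sum, Finset.sum_mul]
    refine Finset.sum_congr rfl fun r _ => ?_
    rw [star_mul, Finset.mul_sum]
  rw [key]
  exact Finset.sum_nonneg fun t _ => star_mul_self_nonneg _

theorem matPos_diag {ι : Type*} [Fintype ι] {M : Matrix ι ι B} (hM : MatPos M) (i : ι) :
    0 ≤ M i i := by
  obtain ⟨N, rfl⟩ := hM
  rw [Matrix.mul_apply]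
  exact Finset.sum_nonneg fun t _ => by
    rw [Matrix.conjTranspose_apply]; exact star_mul_self_nonneg _

theorem matPos_map {ι : Type*} [Fintype ι] {φ : Matrix ι ι A → Matrix ι ι B}
    (hφ : IsCPMap φ) {M : Matrix ι ι A} (hM : MatPos M) : MatPos (φ M) := by
  obtain ⟨N, hN⟩ := hM
  have hpos : MatPos (fun p q : Fin 1 × ι => M p.2 q.2 : Matrix (Fin 1 × ι) (Fin 1 × ι) A) := by
    refine ⟨Matrix.of fun p q => N p.2 q.2, ?_⟩
    ext p q
    rw [hN]
    simp only [Matrix.mul_apply, Matrix.conjTranspose_apply, Fintype.sum_prod_type,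
      Fin.sum_univ_one, Matrix.of_apply]
  obtain ⟨G, hG⟩ := hφ 1 _ hpos
  refine ⟨Matrix.of fun i j => G (0, i) (0, j), ?_⟩
  ext i j
  have h1 : φ M i j = ampl φ 1 (fun p q : Fin 1 × ι => M p.2 q.2) (0, i) (0, j) := rfl
  rw [h1, hG]
  simp only [Matrix.mul_apply, Matrix.conjTranspose_apply, Fintype.sum_prod_type,
    Fin.sum_univ_one, Matrix.of_apply]

theorem isCPMap_Sd {H : Type*} [NormedAddCommGroup H] [InnerProductSpace ℂ H] [CompleteSpace H]
    {ι : Type*} [Fintype ι] [DecidableEq ι]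
    {φ : Matrix ι ι A → Matrix ι ι (H →L[ℂ] H)} (hφ : IsCPMap φ) : IsCPMap (Sd φ) := by
  intro m M hM
  obtain ⟨N₀, hN₀⟩ := hM
  set e : (Fin m × ι) ≃ Fin (m * Fintype.card ι) :=
    (Equiv.prodCongr (Equiv.refl (Fin m)) (Fintype.equivFin ι)).trans finProdFinEquiv with he
  set M' : Matrix (Fin (m * Fintype.card ι) × ι) (Fin (m * Fintype.card ι) × ι) A := Matrix.of fun rk cl =>
    if rk.2 = (e.symm rk.1).2 then
      (if cl.2 = (e.symm cl.1).2 then M (e.symm rk.1) (e.symm cl.1) else 0) else 0 with hM'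
  have hMP' : MatPos M' := by
    refine ⟨Matrix.of fun rk cl =>
      if rk.2 = (e.symm rk.1).2 then
        (if cl.2 = (e.symm cl.1).2 then N₀ (e.symm rk.1) (e.symm cl.1) else 0) else 0, ?_⟩
    ext ⟨r, s⟩ ⟨r', s'⟩
    simp only [hM', Matrix.mul_apply, Matrix.conjTranspose_apply, Fintype.sum_prod_type,
      Matrix.of_apply]
    by_cases h1 : s = (e.symm r).2 <;> by_cases h2 : s' = (e.symm r').2 <;>
      simp only [h1, h2, if_true, if_false, apply_ite (star : A → A), star_zero, ite_mul,
        mul_ite, zero_mul, mul_zero, if_pos rfl]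
    · have hcollapse : ∀ t : Fin (m * Fintype.card ι),
          (∑ u : ι, if u = (e.symm t).2 then
            (if u = (e.symm t).2 then
              star (N₀ (e.symm t) (e.symm r)) * N₀ (e.symm t) (e.symm r') else 0) else 0)
          = star (N₀ (e.symm t) (e.symm r)) * N₀ (e.symm t) (e.symm r') := by
        intro t
        simp
      simp only [hcollapse]
      rw [Equiv.sum_comp e.symm (fun p => star (N₀ p (e.symm r)) * N₀ p (e.symm r')), hN₀,
        Matrix.mul_apply]
      exact Finset.sum_congr rfl fun p _ => by rw [Matrix.conjTranspose_apply]
    · simp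
    · simp
    · simp
  obtain ⟨G₀, hG₀⟩ := hφ (m * Fintype.card ι) M' hMP'
  set T : Matrix (Fin (m * Fintype.card ι) × ι) (Fin m × ι) (H →L[ℂ] H) := Matrix.of fun rk pi =>
    if rk = (e pi, pi.2) then 1 else 0 with hT
  have key : ampl (Sd φ) m M = Tᴴ * (ampl φ (m * Fintype.card ι) M') * T := by
    refine Matrix.ext fun pp qq => ?_
    obtain ⟨p, i⟩ := pp
    obtain ⟨q, j⟩ := qq
    have hstep1 : (Tᴴ * (ampl φ (m * Fintype.card ι) M') * T) (p, i) (q, j)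
        = ampl φ (m * Fintype.card ι) M' (e (p, i), i) (e (q, j), j) := by
      rw [Matrix.mul_apply]
      rw [Finset.sum_eq_single ((e (q, j), j))]
      · rw [Matrix.mul_apply, Finset.sum_eq_single ((e (p, i), i))]
        · simp [hT, Matrix.conjTranspose_apply]
        · intro b _ hb
          simp [hT, Matrix.conjTranspose_apply, hb]
        · simp
      · intro b _ hb
        simp [hT, hb]
      · simp
    rw [hstep1]
    show Sd φ (Matrix.of fun a b => M (p, a) (q, b)) i j
      = φ (Matrix.of fun a b => M' (e (p, i), a) (e (q, j), b)) i j
    have harg : (Matrix.of fun a b => M' (e (p, i), a) (e (q, j), b))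
        = basM i j (M (p, i) (q, j)) := by
      ext a b
      simp [hM', basM, Equiv.symm_apply_apply]
    rw [Sd, harg]
    rfl
  rw [key]
  exact CPAux.matPos_conj ⟨G₀, hG₀⟩ T

end Part2

section Part3

lemma exists_star_mul_self {R : Type*} [CStarAlgebra R] [PartialOrder R] [StarOrderedRing R]
    {a : R} (ha : 0 ≤ a) : ∃ t : R, a = star t * t :=
  ⟨CFC.sqrt a, by
    rw [(IsSelfAdjoint.of_nonneg (CFC.sqrt_nonneg _)).star_eq, CFC.sqrt_mul_sqrt_self a ha]⟩

lemma smul_nonneg'' {R : Type*} [CStarAlgebra R] [PartialOrder R] [StarOrderedRing R]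
    {x : R} (hx : 0 ≤ x) {r : ℝ} (hr : 0 ≤ r) : 0 ≤ ((r : ℂ)) • x := by
  obtain ⟨t, rfl⟩ := exists_star_mul_self hx
  have key : ((r : ℂ)) • (star t * t)
      = star (((Real.sqrt r : ℂ)) • t) * (((Real.sqrt r : ℂ)) • t) := by
    rw [star_smul, smul_mul_smul_comm]
    rw [Complex.star_def, Complex.conj_ofReal, ← Complex.ofReal_mul, Real.mul_self_sqrt hr]
  rw [key]
  exact star_mul_self_nonneg _

theorem exists_bound_of_pos {A : Type*} [CStarAlgebra A]
    {B : Type*} [CStarAlgebra B] [PartialOrder B] [StarOrderedRing B]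
    (φ : A →ₗ[ℂ] B) (hφ : ∀ t : A, 0 ≤ φ (star t * t)) :
    ∃ C : ℝ, 0 ≤ C ∧ ∀ a : A, ‖φ a‖ ≤ C * ‖a‖ := by
  letI : PartialOrder A := CStarAlgebra.spectralOrder A
  haveI : StarOrderedRing A := CStarAlgebra.spectralOrderedRing A
  have hpos : ∀ a : A, 0 ≤ a → 0 ≤ φ a := by
    intro a ha
    obtain ⟨t, rfl⟩ := exists_star_mul_self ha
    exact hφ t
  have hmono : ∀ a b : A, a ≤ b → φ a ≤ φ b := by
    intro a b hab
    have h := hpos (b - a) (sub_nonneg.mpr hab)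
    rw [map_sub] at h
    exact sub_nonneg.mp h
  obtain ⟨C₀, hC₀⟩ : ∃ C₀ : ℝ, ∀ a : A, 0 ≤ a → ‖a‖ ≤ 1 → ‖φ a‖ ≤ C₀ := by
    by_contra hcon
    push_neg at hcon
    choose u hu0 hu1 hu2 using fun nn : ℕ => hcon ((4 : ℝ) ^ nn)
    set f : ℕ → A := fun nn => (((1 / 2 : ℝ) ^ nn : ℝ) : ℂ) • u nn with hf
    have hfn : ∀ nn, ‖f nn‖ ≤ (1 / 2 : ℝ) ^ nn := by
      intro nn
      rw [hf]
      simp only [norm_smul, Complex.norm_real]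
      calc ‖(1 / 2 : ℝ) ^ nn‖ * ‖u nn‖ ≤ ‖(1 / 2 : ℝ) ^ nn‖ * 1 :=
            mul_le_mul_of_nonneg_left (hu1 nn) (norm_nonneg _)
        _ = (1 / 2 : ℝ) ^ nn := by
            rw [mul_one, Real.norm_eq_abs, abs_of_nonneg (by positivity)]
    have hsum : Summable f :=
      Summable.of_norm_bounded
        (summable_geometric_of_lt_one (by norm_num) (by norm_num)) hfn
    set a := ∑' nn, f nn with ha
    have hf0 : ∀ nn, 0 ≤ f nn := fun nn => smul_nonneg'' (hu0 nn) (by positivity)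
    have hfa : ∀ nn, f nn ≤ a := by
      intro nn
      have hrest : 0 ≤ ∑' mm, if mm = nn then 0 else f mm :=
        tsum_nonneg fun mm => by
          by_cases h : mm = nn
          · simp [h]
          · simpa [h] using hf0 mm
      calc f nn ≤ f nn + ∑' mm, if mm = nn then 0 else f mm := le_add_of_nonneg_right hrest
        _ = a := (Summable.tsum_eq_add_tsum_ite hsum nn).symm
    have hcontr : ∀ nn : ℕ, (2 : ℝ) ^ nn ≤ ‖φ a‖ := by
      intro nn
      have h3 : ‖φ (f nn)‖ ≤ ‖φ a‖ :=
        CStarAlgebra.norm_le_norm_of_nonneg_of_le (hpos _ (hf0 nn)) (hmono _ _ (hfa nn))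
      have h4 : ‖φ (f nn)‖ = (1 / 2 : ℝ) ^ nn * ‖φ (u nn)‖ := by
        rw [hf]
        simp only [map_smul, norm_smul, Complex.norm_real]
        rw [Real.norm_eq_abs, abs_of_nonneg (by positivity : (0:ℝ) ≤ (1/2:ℝ)^nn)]
      have h5 : (2 : ℝ) ^ nn ≤ ‖φ (f nn)‖ := by
        rw [h4]
        have : (2 : ℝ) ^ nn = (1 / 2 : ℝ) ^ nn * (4 : ℝ) ^ nn := by
          rw [← mul_pow]; norm_num
        rw [this]
        exact mul_le_mul_of_nonneg_left (hu2 nn).le (by positivity)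
      linarith
    obtain ⟨nn, hn⟩ := pow_unbounded_of_one_lt ‖φ a‖ (by norm_num : (1 : ℝ) < 2)
    exact absurd (hcontr nn) (not_le.mpr hn)
  have hC₀0 : 0 ≤ C₀ := le_trans (by simp) (hC₀ 0 le_rfl (by simp))
  have hposb : ∀ a : A, 0 ≤ a → ‖φ a‖ ≤ C₀ * ‖a‖ := by
    intro a ha
    rcases eq_or_ne a 0 with rfl | h0
    · simp
    · have hna : 0 < ‖a‖ := norm_pos_iff.mpr h0
      have hb0 : (0 : A) ≤ ((‖a‖⁻¹ : ℝ) : ℂ) • a := smul_nonneg'' ha (by positivity)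
      have hb1 : ‖((‖a‖⁻¹ : ℝ) : ℂ) • a‖ ≤ 1 := by
        rw [norm_smul, Complex.norm_real, Real.norm_eq_abs, abs_of_nonneg (by positivity)]
        rw [inv_mul_cancel₀ hna.ne']
      have hb := hC₀ _ hb0 hb1
      rw [map_smul, norm_smul, Complex.norm_real, Real.norm_eq_abs,
        abs_of_nonneg (by positivity)] at hb
      calc ‖φ a‖ = ‖a‖ * (‖a‖⁻¹ * ‖φ a‖) := by field_simp
        _ ≤ ‖a‖ * C₀ := mul_le_mul_of_nonneg_left hb hna.le
        _ = C₀ * ‖a‖ := mul_comm _ _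
  set K := ‖(1 : A)‖ with hK
  have halgnn : ∀ r : ℝ, 0 ≤ r → (0 : A) ≤ algebraMap ℝ A r := by
    intro r hr
    rw [Algebra.algebraMap_eq_smul_one, ← Complex.coe_smul]
    exact smul_nonneg'' (by simpa using star_mul_self_nonneg (1 : A)) hr
  have halgnorm : ∀ r : ℝ, ‖algebraMap ℝ A r‖ ≤ |r| * K := by
    intro r
    rw [Algebra.algebraMap_eq_smul_one, norm_smul, Real.norm_eq_abs, hK]
  have hCsa0 : 0 ≤ C₀ * (2 * K + 1) := by positivity
  have hsa : ∀ a : A, IsSelfAdjoint a → ‖φ a‖ ≤ C₀ * (2 * K + 1) * ‖a‖ := by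
    intro a hsaa
    have h1 : (0 : A) ≤ algebraMap ℝ A ‖a‖ - a :=
      sub_nonneg.mpr (IsSelfAdjoint.le_algebraMap_norm_self hsaa)
    have h2 : (0 : A) ≤ algebraMap ℝ A ‖a‖ := halgnn _ (norm_nonneg a)
    have hdecomp : a = algebraMap ℝ A ‖a‖ - (algebraMap ℝ A ‖a‖ - a) := (sub_sub_cancel _ _).symm
    have hn1 : ‖algebraMap ℝ A ‖a‖‖ ≤ K * ‖a‖ := by
      calc ‖algebraMap ℝ A ‖a‖‖ ≤ |‖a‖| * K := halgnorm _
        _ = K * ‖a‖ := by rw [abs_of_nonneg (norm_nonneg a), mul_comm]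
    calc ‖φ a‖ = ‖φ (algebraMap ℝ A ‖a‖) - φ (algebraMap ℝ A ‖a‖ - a)‖ := by
          rw [← map_sub, ← hdecomp]
      _ ≤ ‖φ (algebraMap ℝ A ‖a‖)‖ + ‖φ (algebraMap ℝ A ‖a‖ - a)‖ := norm_sub_le _ _
      _ ≤ C₀ * ‖algebraMap ℝ A ‖a‖‖ + C₀ * ‖algebraMap ℝ A ‖a‖ - a‖ :=
          add_le_add (hposb _ h2) (hposb _ h1)
      _ ≤ C₀ * (K * ‖a‖) + C₀ * (K * ‖a‖ + ‖a‖) := by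
          have h3 : ‖algebraMap ℝ A ‖a‖ - a‖ ≤ K * ‖a‖ + ‖a‖ :=
            le_trans (norm_sub_le _ _) (add_le_add_left hn1 _)
          exact add_le_add (mul_le_mul_of_nonneg_left hn1 hC₀0)
            (mul_le_mul_of_nonneg_left h3 hC₀0)
      _ = C₀ * (2 * K + 1) * ‖a‖ := by ring
  refine ⟨2 * (C₀ * (2 * K + 1)), by positivity, fun a => ?_⟩
  set x := (2⁻¹ : ℝ) • (a + star a) with hx
  set z := (2⁻¹ : ℝ) • (a - star a) with hz
  have hx_sa : IsSelfAdjoint x := by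
    rw [IsSelfAdjoint, hx, star_smul, star_trivial, star_add, star_star, add_comm]
  have hz_star : star z = -z := by
    rw [hz, star_smul, star_trivial, star_sub, star_star, ← smul_neg, neg_sub]
  have ha_eq : a = x + z := by
    rw [hx, hz, ← smul_add]
    rw [show a + star a + (a - star a) = (2 : ℝ) • a by
      rw [two_smul]; abel]
    rw [smul_smul]
    norm_num
  have hx_norm : ‖x‖ ≤ ‖a‖ := by
    rw [hx, norm_smul, Real.norm_eq_abs]
    calc |(2⁻¹ : ℝ)| * ‖a + star a‖ ≤ |(2⁻¹ : ℝ)| * (‖a‖ + ‖star a‖) :=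
          mul_le_mul_of_nonneg_left (norm_add_le _ _) (abs_nonneg _)
      _ = ‖a‖ := by rw [norm_star]; rw [abs_of_nonneg (by norm_num : (0:ℝ) ≤ 2⁻¹)]; ring
  have hz_norm : ‖z‖ ≤ ‖a‖ := by
    rw [hz, norm_smul, Real.norm_eq_abs]
    calc |(2⁻¹ : ℝ)| * ‖a - star a‖ ≤ |(2⁻¹ : ℝ)| * (‖a‖ + ‖star a‖) :=
          mul_le_mul_of_nonneg_left (norm_sub_le _ _) (abs_nonneg _)
      _ = ‖a‖ := by rw [norm_star]; rw [abs_of_nonneg (by norm_num : (0:ℝ) ≤ 2⁻¹)]; ring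
  set w := Complex.I • z with hw
  have hw_sa : IsSelfAdjoint w := by
    rw [IsSelfAdjoint, hw, star_smul, Complex.star_def, Complex.conj_I, hz_star, neg_smul,
      smul_neg, neg_neg]
  have hw_norm : ‖w‖ = ‖z‖ := by
    rw [hw, norm_smul, Complex.norm_I, one_mul]
  have hzw : z = (-Complex.I) • w := by
    rw [hw, smul_smul]
    simp
  have hφz : ‖φ z‖ = ‖φ w‖ := by
    rw [hzw, map_smul, norm_smul]
    simp
  calc ‖φ a‖ = ‖φ x + φ z‖ := by rw [← map_add, ← ha_eq]
    _ ≤ ‖φ x‖ + ‖φ z‖ := norm_add_le _ _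
    _ = ‖φ x‖ + ‖φ w‖ := by rw [hφz]
    _ ≤ C₀ * (2 * K + 1) * ‖x‖ + C₀ * (2 * K + 1) * ‖w‖ :=
        add_le_add (hsa _ hx_sa) (hsa _ hw_sa)
    _ ≤ C₀ * (2 * K + 1) * ‖a‖ + C₀ * (2 * K + 1) * ‖a‖ := by
        rw [hw_norm]
        exact add_le_add (mul_le_mul_of_nonneg_left hx_norm hCsa0)
          (mul_le_mul_of_nonneg_left hz_norm hCsa0)
    _ = 2 * (C₀ * (2 * K + 1)) * ‖a‖ := by ring

end Part3

section Part4

variable {A : Type*} [CStarAlgebra A]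
variable {H : Type*} [NormedAddCommGroup H] [InnerProductSpace ℂ H] [CompleteSpace H]

theorem exists_entry_clm (n : ℕ)
    (Q : Matrix (Fin n) (Fin n) A →ₗ[ℂ] Matrix (Fin n) (Fin n) (H →L[ℂ] H))
    (hQ : IsCPMap ⇑Q) :
    ∃ L : Fin n → Fin n → A →L[ℂ] (H →L[ℂ] H),
      ∀ (i j : Fin n) (a : A), L i j a = Q (basM i j a) i j := by
  have hbas_add : ∀ (i j : Fin n) (a b : A), basM i j (a + b) = basM i j a + basM i j b := by
    intro i j a b
    ext r c
    simp only [basM, Matrix.of_apply, Matrix.add_apply]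
    split_ifs <;> simp
  have hbas_smul : ∀ (i j : Fin n) (c : ℂ) (a : A), basM i j (c • a) = c • basM i j a := by
    intro i j cc a
    ext r c
    simp only [basM, Matrix.of_apply, Matrix.smul_apply]
    split_ifs <;> simp
  set Llin : Fin n → Fin n → A →ₗ[ℂ] (H →L[ℂ] H) := fun i j =>
    { toFun := fun a => Q (basM i j a) i j
      map_add' := fun a b => by rw [hbas_add, map_add, Matrix.add_apply]
      map_smul' := fun c a => by rw [hbas_smul, map_smul, Matrix.smul_apply]; rfl } with hLlin
  have hdiagpos : ∀ (i : Fin n) (t : A), 0 ≤ Llin i i (star t * t) := by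
    intro i t
    have hb : MatPos (basM i i (star t * t) : Matrix (Fin n) (Fin n) A) := by
      refine ⟨basM i i t, ?_⟩
      ext r c
      rw [Matrix.mul_apply, Finset.sum_eq_single i]
      · simp only [basM, Matrix.of_apply, Matrix.conjTranspose_apply, if_pos rfl]
        split <;> split <;> simp
      · intro u _ hu
        simp [basM, Matrix.conjTranspose_apply, hu]
      · simp
    exact matPos_diag (matPos_map hQ hb) i
  have hdiagbdd : ∀ i : Fin n, ∃ C : ℝ, 0 ≤ C ∧ ∀ a, ‖Llin i i a‖ ≤ C * ‖a‖ := fun i =>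
    exists_bound_of_pos (Llin i i) (hdiagpos i)
  choose Cd hCd0 hCd using hdiagbdd
  have hSdQ : IsCPMap (Sd ⇑Q) := isCPMap_Sd hQ
  have hbdd : ∀ i j : Fin n, ∃ C : ℝ, ∀ a, ‖Llin i j a‖ ≤ C * ‖a‖ := by
    intro i j
    rcases eq_or_ne i j with rfl | hij
    · exact ⟨Cd i, hCd i⟩
    · refine ⟨Real.sqrt (‖Llin i i 1‖ * Cd j), fun a => ?_⟩
      set w : Fin n → A := fun r => if r = i then 1 else (if r = j then a else 0) with hwdef
      set Mw : Matrix (Fin n) (Fin n) A := Matrix.of fun r c => star (w r) * w c with hMw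
      have hMwpos : MatPos Mw := by
        refine ⟨Matrix.of fun r c => if r = i then w c else 0, ?_⟩
        ext r c
        rw [Matrix.mul_apply, Finset.sum_eq_single i]
        · simp [hMw, Matrix.conjTranspose_apply]
        · intro u _ hu
          simp [Matrix.conjTranspose_apply, hu]
        · simp
      have hG : MatPos (Sd (⇑Q) Mw) := matPos_map hSdQ hMwpos
      have hcs := CPAux.matPos_norm_sq_le hG i j
      have hii : Sd (⇑Q) Mw i i = Llin i i 1 := by
        show Q (basM i i (Mw i i)) i i = _
        have hv : Mw i i = 1 := by simp [hMw, hwdef]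
        rw [hv]; rfl
      have hij' : Sd (⇑Q) Mw i j = Llin i j a := by
        show Q (basM i j (Mw i j)) i j = _
        have hv : Mw i j = a := by simp [hMw, hwdef, Ne.symm hij]
        rw [hv]; rfl
      have hjj : Sd (⇑Q) Mw j j = Llin j j (star a * a) := by
        show Q (basM j j (Mw j j)) j j = _
        have hv : Mw j j = star a * a := by simp [hMw, hwdef, Ne.symm hij]
        rw [hv]; rfl
      rw [hii, hij', hjj] at hcs
      have h2 : ‖Llin j j (star a * a)‖ ≤ Cd j * (‖a‖ * ‖a‖) := by
        calc ‖Llin j j (star a * a)‖ ≤ Cd j * ‖star a * a‖ := hCd j _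
          _ = Cd j * (‖a‖ * ‖a‖) := by rw [CStarRing.norm_star_mul_self]
      have hsq : ‖Llin i j a‖ ^ 2 ≤ (‖Llin i i 1‖ * Cd j) * (‖a‖ * ‖a‖) := by
        nlinarith [norm_nonneg (Llin i i (1 : A)), norm_nonneg (Llin i j a), norm_nonneg a,
          norm_nonneg (Llin j j (star a * a))]
      calc ‖Llin i j a‖ = Real.sqrt (‖Llin i j a‖ ^ 2) := (Real.sqrt_sq (norm_nonneg _)).symm
        _ ≤ Real.sqrt ((‖Llin i i 1‖ * Cd j) * (‖a‖ * ‖a‖)) := Real.sqrt_le_sqrt hsq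
        _ = Real.sqrt (‖Llin i i 1‖ * Cd j) * ‖a‖ := by
            rw [Real.sqrt_mul (mul_nonneg (norm_nonneg _) (hCd0 j)),
              Real.sqrt_mul_self (norm_nonneg a)]
  choose C hC using hbdd
  refine ⟨fun i j => LinearMap.mkContinuous (Llin i j) (C i j) (hC i j), fun i j a => rfl⟩

theorem isCPKernel_of (n : ℕ)
    (Q : Matrix (Fin n) (Fin n) A →ₗ[ℂ] Matrix (Fin n) (Fin n) (H →L[ℂ] H))
    (hQ : IsCPMap ⇑Q) (L : Fin n → Fin n → A →L[ℂ] (H →L[ℂ] H))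
    (hL : ∀ (i j : Fin n) (a : A), L i j a = Q (basM i j a) i j) :
    IsCPKernel L := by
  intro m y a b
  rcases Nat.eq_zero_or_pos m with rfl | hm
  · simp
  have p0 : Fin m := ⟨0, hm⟩
  set M : Matrix (Fin m × Fin n) (Fin m × Fin n) A := Matrix.of fun pi qj =>
    if pi.2 = y pi.1 then (if qj.2 = y qj.1 then star (a pi.1) * a qj.1 else 0) else 0 with hM
  have hMpos : MatPos M := by
    refine ⟨Matrix.of fun pi qj => if pi = (p0, y p0) then (if qj.2 = y qj.1 then a qj.1 else 0) else 0, ?_⟩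
    ext ⟨p, i⟩ ⟨q, j⟩
    rw [Matrix.mul_apply, Finset.sum_eq_single ((p0, y p0) : Fin m × Fin n)]
    · simp only [Matrix.conjTranspose_apply, if_pos rfl, hM, Matrix.of_apply]
      by_cases h1 : i = y p <;> by_cases h2 : j = y q <;>
        simp [h1, h2, apply_ite (star : A → A)]
    · intro u _ hu
      simp [Matrix.conjTranspose_apply, hu]
    · simp
  have hMat : MatPos (ampl (Sd ⇑Q) m M) := isCPMap_Sd hQ m M hMpos
  set w : Fin m × Fin n → (H →L[ℂ] H) := fun pi => if pi.2 = y pi.1 then b pi.1 else 0 with hw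
  have hquad := quadform_nonneg hMat w
  have hEq : ∑ pi : Fin m × Fin n, ∑ qj : Fin m × Fin n,
      star (w pi) * (ampl (Sd ⇑Q) m M) pi qj * w qj
      = ∑ p : Fin m, ∑ q : Fin m,
          star (b p) * (L (y p) (y q) (star (a p) * a q)) * b q := by
    rw [Fintype.sum_prod_type]
    refine Finset.sum_congr rfl fun p _ => ?_
    rw [Finset.sum_eq_single (y p)]
    · rw [Fintype.sum_prod_type]
      refine Finset.sum_congr rfl fun q _ => ?_
      rw [Finset.sum_eq_single (y q)]
      · have hGentry : (ampl (Sd ⇑Q) m M) (p, y p) (q, y q)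
            = L (y p) (y q) (star (a p) * a q) := by
          show Q (basM (y p) (y q) (M (p, y p) (q, y q))) (y p) (y q) = _
          have hMval : M (p, y p) (q, y q) = star (a p) * a q := by simp [hM]
          rw [hMval, ← hL]
        rw [hGentry]
        simp [hw]
      · intro j _ hj
        simp [hw, hj]
      · simp
    · intro i _ hi
      simp [hw, hi]
    · simp
  rw [hEq] at hquad
  exact hquad

end Part4

/-- if for a finite family `x_1, …, x_n` in `X` there are completely
positive maps `P₁, P₂ : M_n(A) → M_n(L(H))` making the block map
`[[P₁, S_{k_F}], [S_{k_F}*, P₂]]` completely positive, then there are completely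
positive kernels `L₁, L₂` on `F` making the block map
`[[S_{L₁}, S_{k_F}], [S_{k_F}*, S_{L₂}]]` completely positive. -/
theorem local_solutions_exist {X : Type*} {A : Type*} [CStarAlgebra A]
    {H : Type*} [NormedAddCommGroup H] [InnerProductSpace ℂ H] [CompleteSpace H]
    (n : ℕ) (k : X → X → A →L[ℂ] (H →L[ℂ] H)) (x : Fin n → X)
    (P₁ P₂ : Matrix (Fin n) (Fin n) A →ₗ[ℂ] Matrix (Fin n) (Fin n) (H →L[ℂ] H))
    (hP₁ : IsCPMap ⇑P₁) (hP₂ : IsCPMap ⇑P₂)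
    (hblock : IsCPMap (blockMap ![![⇑P₁, schurMap k x],
      ![fun C => (schurMap k x Cᴴ)ᴴ, ⇑P₂]])) :
    ∃ L₁ L₂ : Fin n → Fin n → A →L[ℂ] (H →L[ℂ] H),
      IsCPKernel L₁ ∧ IsCPKernel L₂ ∧
      IsCPMap (blockMap ![![schurMap L₁ (id : Fin n → Fin n), schurMap k x],
        ![fun C => (schurMap k x Cᴴ)ᴴ, schurMap L₂ (id : Fin n → Fin n)]]) := by
  obtain ⟨L₁, hL₁⟩ := exists_entry_clm n P₁ hP₁
  obtain ⟨L₂, hL₂⟩ := exists_entry_clm n P₂ hP₂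
  refine ⟨L₁, L₂, isCPKernel_of n P₁ hP₁ L₁ hL₁, isCPKernel_of n P₂ hP₂ L₂ hL₂, ?_⟩
  have hSdb : IsCPMap (Sd (blockMap ![![⇑P₁, schurMap k x],
      ![fun C => (schurMap k x Cᴴ)ᴴ, ⇑P₂]])) := isCPMap_Sd hblock
  have hfeq : Sd (blockMap ![![⇑P₁, schurMap k x],
        ![fun C => (schurMap k x Cᴴ)ᴴ, ⇑P₂]])
      = blockMap ![![schurMap L₁ (id : Fin n → Fin n), schurMap k x],
        ![fun C => (schurMap k x Cᴴ)ᴴ, schurMap L₂ (id : Fin n → Fin n)]] := by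
    funext M
    refine Matrix.ext fun pp qq => ?_
    obtain ⟨s, i⟩ := pp
    obtain ⟨t, j⟩ := qq
    have hbas : (Matrix.of fun a b =>
        (basM (s, i) (t, j) (M (s, i) (t, j)) : Matrix (Fin 2 × Fin n) (Fin 2 × Fin n) A)
          (s, a) (t, b)) = basM i j (M (s, i) (t, j)) := by
      ext a b
      simp [basM, Prod.ext_iff]
    show (blockMap ![![⇑P₁, schurMap k x], ![fun C => (schurMap k x Cᴴ)ᴴ, ⇑P₂]])
        (basM (s, i) (t, j) (M (s, i) (t, j))) (s, i) (t, j)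
      = (blockMap ![![schurMap L₁ (id : Fin n → Fin n), schurMap k x],
          ![fun C => (schurMap k x Cᴴ)ᴴ, schurMap L₂ (id : Fin n → Fin n)]]) M (s, i) (t, j)
    rw [blockMap, blockMap]
    simp only [Matrix.of_apply]
    rw [show (Matrix.of fun a b =>
        (basM (s, i) (t, j) (M (s, i) (t, j)) : Matrix (Fin 2 × Fin n) (Fin 2 × Fin n) A)
          ((s, i).1, a) ((t, j).1, b)) = basM i j (M (s, i) (t, j)) from hbas]
    fin_cases s <;> fin_cases t <;>
      simp only [Fin.mk_zero, Fin.mk_one, Matrix.cons_val', Matrix.cons_val_zero,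
        Matrix.cons_val_one, Matrix.head_cons, Matrix.empty_val', Matrix.cons_val_fin_one,
        Matrix.head_fin_const, Fin.isValue]
    · rw [← hL₁]
      rfl
    · simp [schurMap, basM]
    · simp [schurMap, basM, Matrix.conjTranspose_apply]
    · rw [← hL₂]
      rfl
  rw [← hfeq]
  exact hSdb
end

section
/- Let k be a kernel on X with values in L(A,B). Then the following are equivalent: (a) there exist completely positive kernels L₁, L₂ with values in L(A,B) such that the kernel (x,y) ↦ (a ↦ [[L₁(x,y)[a], k(x,y)[a]], [k*(x,y)[a], L₂(x,y)[a]]]), with values in L(A, M₂(B)), is completely positive; (b) there exist completely positive kernels L₁, L₂ with values in L(A,B) such that the kernel (x,y) ↦ ((a_{uv})_{u,v=1,2} ↦ [[L₁(x,y)[a₁₁], k(x,y)[a₁₂]], [k*(x,y)[a₂₁], L₂(x,y)[a₂₂]]]), with values in L(M₂(A), M₂(B)), is completely positive. -/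
open scoped ComplexOrder InnerProductSpace Matrix

section MatPosAdd


theorem nonneg_eq_star_mul_self_aux {C : Type*} [CStarAlgebra C] [PartialOrder C]
    [StarOrderedRing C] {a : C} (h : 0 ≤ a) : ∃ s, a = star s * s :=
  CStarAlgebra.nonneg_iff_eq_star_mul_self.mp h

theorem matPos_add {B : Type*} [CStarAlgebra B] [PartialOrder B] [StarOrderedRing B]
    {P Q : Matrix (Fin 2) (Fin 2) B} (hP : MatPos P) (hQ : MatPos Q) : MatPos (P + Q) := by
  obtain ⟨N, hN⟩ := hP
  obtain ⟨N', hN'⟩ := hQ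
  have h1 : (0 : CStarMatrix (Fin 2) (Fin 2) B) ≤ CStarMatrix.ofMatrix P := by
    rw [hN]; exact star_mul_self_nonneg (CStarMatrix.ofMatrix N)
  have h2 : (0 : CStarMatrix (Fin 2) (Fin 2) B) ≤ CStarMatrix.ofMatrix Q := by
    rw [hN']; exact star_mul_self_nonneg (CStarMatrix.ofMatrix N')
  have h3 : (0 : CStarMatrix (Fin 2) (Fin 2) B) ≤ CStarMatrix.ofMatrix (P + Q) := add_nonneg h1 h2
  obtain ⟨s, hs⟩ := nonneg_eq_star_mul_self_aux h3
  exact ⟨CStarMatrix.ofMatrix.symm s, hs⟩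

/-- reindexing double sums over `Fin (n*2)` by products -/
theorem sum_reindex_prod {β : Type*} [AddCommMonoid β] (n : ℕ)
    (f : (Fin n × Fin 2) → (Fin n × Fin 2) → β) :
    (∑ I : Fin (n*2), ∑ J : Fin (n*2),
        f (finProdFinEquiv.symm I) (finProdFinEquiv.symm J))
      = ∑ p : Fin n × Fin 2, ∑ q : Fin n × Fin 2, f p q := by
  calc ∑ I : Fin (n*2), ∑ J : Fin (n*2), f (finProdFinEquiv.symm I) (finProdFinEquiv.symm J)
      = ∑ I : Fin (n*2), (fun p => ∑ q, f p q) (finProdFinEquiv.symm I) := by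
        refine Finset.sum_congr rfl fun I _ => ?_
        exact Equiv.sum_comp finProdFinEquiv.symm (f (finProdFinEquiv.symm I))
    _ = ∑ p : Fin n × Fin 2, ∑ q : Fin n × Fin 2, f p q :=
        Equiv.sum_comp finProdFinEquiv.symm (fun p => ∑ q, f p q)

end MatPosAdd

set_option maxHeartbeats 3000000 in
/-- Haagerup's lemma for kernels: there exist completely positive
kernels `L₁, L₂` making the `L(A, M₂(B))`-valued kernel
`a ↦ [[L₁[a], k[a]], [k*[a], L₂[a]]]` completely positive iff there exist completely
positive kernels `L₁, L₂` making the `L(M₂(A), M₂(B))`-valued kernel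
`(a_{uv}) ↦ [[L₁[a₁₁], k[a₁₂]], [k*[a₂₁], L₂[a₂₂]]]` completely positive. -/
theorem haagerup_trick_for_kernels {X : Type*} {A : Type*} [CStarAlgebra A]
    {B : Type*} [CStarAlgebra B] [PartialOrder B] [StarOrderedRing B]
    (k : X → X → A →L[ℂ] B) :
    (∃ L₁ L₂ : X → X → A →L[ℂ] B, IsCPKernel L₁ ∧ IsCPKernel L₂ ∧
      IsCPKernelM fun x y a =>
        !![L₁ x y a, k x y a; kadj k x y a, L₂ x y a]) ↔
    (∃ L₁ L₂ : X → X → A →L[ℂ] B, IsCPKernel L₁ ∧ IsCPKernel L₂ ∧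
      IsCPKernelMM fun x y M =>
        !![L₁ x y (M 0 0), k x y (M 0 1);
           kadj k x y (M 1 0), L₂ x y (M 1 1)]) := by
  constructor
  · rintro ⟨L₁, L₂, h₁, h₂, hK⟩
    refine ⟨L₁, L₂, h₁, h₂, ?_⟩
    intro n x c d
    set bb : Fin n → Fin 2 → Matrix (Fin 2) (Fin 2) B :=
      (fun i u => Matrix.of fun r s => if r = u then d i r s else 0) with hbb
    have swap : ∀ f : Fin n → Fin 2 → Fin n → Fin 2 → Matrix (Fin 2) (Fin 2) B,
        (∑ p : Fin n × Fin 2, ∑ q : Fin n × Fin 2, f p.1 p.2 q.1 q.2)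
          = ∑ i, ∑ j, ∑ u, ∑ v, f i u j v := by
      intro f
      rw [Fintype.sum_prod_type]
      refine Finset.sum_congr rfl fun i _ => ?_
      calc ∑ u, ∑ q : Fin n × Fin 2, f i u q.1 q.2
          = ∑ u, ∑ j, ∑ v, f i u j v :=
            Finset.sum_congr rfl fun u _ => Fintype.sum_prod_type _
        _ = ∑ j, ∑ u, ∑ v, f i u j v := Finset.sum_comm
    have hT : ∀ w : Fin 2, MatPos (∑ i, ∑ j, ∑ u, ∑ v,
        (bb i u)ᴴ *
          !![(L₁ (x i) (x j)) (star (c i w u) * c j w v),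
             (k (x i) (x j)) (star (c i w u) * c j w v);
             (kadj k (x i) (x j)) (star (c i w u) * c j w v),
             (L₂ (x i) (x j)) (star (c i w u) * c j w v)] *
          (bb j v)) := by
      intro w
      obtain ⟨N, hN⟩ := hK (n*2) (fun I => x (finProdFinEquiv.symm I).1)
        (fun I => c (finProdFinEquiv.symm I).1 w (finProdFinEquiv.symm I).2)
        (fun I => bb (finProdFinEquiv.symm I).1 (finProdFinEquiv.symm I).2)
      refine ⟨N, ?_⟩
      rw [← hN]
      exact ((swap _).symm.trans
        (sum_reindex_prod n (fun p q =>
          (bb p.1 p.2)ᴴ *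
            !![(L₁ (x p.1) (x q.1)) (star (c p.1 w p.2) * c q.1 w q.2),
               (k (x p.1) (x q.1)) (star (c p.1 w p.2) * c q.1 w q.2);
               (kadj k (x p.1) (x q.1)) (star (c p.1 w p.2) * c q.1 w q.2),
               (L₂ (x p.1) (x q.1)) (star (c p.1 w p.2) * c q.1 w q.2)] *
            (bb q.1 q.2))).symm)
    obtain ⟨N0, hN0⟩ := hT 0
    obtain ⟨N1, hN1⟩ := hT 1
    obtain ⟨N, hN⟩ := matPos_add ⟨N0, rfl⟩ ⟨N1, rfl⟩
    refine ⟨N, ?_⟩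
    rw [← hN, ← hN0, ← hN1]
    simp only [← Finset.sum_add_distrib]
    refine Finset.sum_congr rfl fun i _ => Finset.sum_congr rfl fun j _ => ?_
    have hcc : ∀ u v : Fin 2,
        ((c i)ᴴ * c j) u v = star (c i 0 u) * c j 0 v + star (c i 1 u) * c j 1 v := by
      intro u v
      simp [Matrix.mul_apply, Matrix.conjTranspose_apply, Fin.sum_univ_two]
    ext p q
    simp only [hcc, map_add, hbb]
    simp [Matrix.mul_apply, Matrix.sum_apply, Matrix.add_apply, Matrix.of_apply,
      Fin.sum_univ_two, Matrix.vecHead, Matrix.vecTail, mul_add, add_mul, mul_assoc]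
    abel
  · rintro ⟨L₁, L₂, h₁, h₂, hK⟩
    refine ⟨L₁, L₂, h₁, h₂, ?_⟩
    intro n x a b
    set C : Fin n → Matrix (Fin 2) (Fin 2) A :=
      (fun i => Matrix.of fun u v => if u = 0 then a i else 0) with hC
    have h := hK n x C b
    obtain ⟨N, hN⟩ := h
    refine ⟨N, ?_⟩
    rw [← hN]
    refine Finset.sum_congr rfl fun i _ => Finset.sum_congr rfl fun j _ => ?_
    have hc : ∀ u v : Fin 2, ((C i)ᴴ * C j) u v = star (a i) * a j := by
      intro u v
      simp [hC, Matrix.mul_apply, Matrix.conjTranspose_apply, Fin.sum_univ_two]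
    congr 2
    simp only [hc]
end
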